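/- arXiv:0911.0513 — 5 statements merged into one kernel-verified Lean document; each statement's English description precedes it below -/
import Mathlib

section
/- Let $q$ be a power of an odd prime and $r \ge 1$ an integer. If $A \subseteq \mathbb{F}_q^r$ is a progression-free set of density $\alpha := q^{-r}|A|$, then there exist an element $g \in \mathbb{F}_q^r$ and a linear subspace $V < \mathbb{F}_q^r$ of codimension $1$ such that the density of $A$ on the affine subspace $g + V$ satisfies $|A \cap (g+V)|/|V| \ge (\alpha - q^{-r})/(1-\alpha)$. -/
open Finset

/-- A set is progression-free if `a + c = 2b` with `a,b,c ∈ A` forces `a = c`. -/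
def ProgressionFree {G : Type*} [AddCommGroup G] (A : Set G) : Prop :=
  ∀ a ∈ A, ∀ b ∈ A, ∀ c ∈ A, a + c = b + b → a = c

private lemma addChar_map_sum {A M : Type*} [AddCommMonoid A] [CommMonoid M]
    (ψ : AddChar A M) {ι : Type*} (s : Finset ι) (f : ι → A) :
    ψ (∑ i ∈ s, f i) = ∏ i ∈ s, ψ (f i) := by
  classical
  induction s using Finset.induction_on with
  | empty => simp
  | @insert a s h ih => rw [Finset.sum_insert h, Finset.prod_insert h, AddChar.map_add_eq_mul, ih]

/-- The dot product on `Fin r → F`. -/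
private def dotp {F : Type*} [CommRing F] {r : ℕ} (u x : Fin r → F) : F := ∑ i, u i * x i

private lemma dotp_add {F : Type*} [CommRing F] {r : ℕ} (u x y : Fin r → F) :
    dotp u (x + y) = dotp u x + dotp u y := by
  simp only [dotp, ← Finset.sum_add_distrib]
  exact Finset.sum_congr rfl fun i _ => by simp [mul_add]

private lemma dotp_sub {F : Type*} [CommRing F] {r : ℕ} (u x y : Fin r → F) :
    dotp u (x - y) = dotp u x - dotp u y := by
  simp only [dotp, ← Finset.sum_sub_distrib]
  exact Finset.sum_congr rfl fun i _ => by simp [mul_sub]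

private lemma dotp_zero_right {F : Type*} [CommRing F] {r : ℕ} (u : Fin r → F) :
    dotp u 0 = 0 := by simp [dotp]

private lemma dotp_zero_left {F : Type*} [CommRing F] {r : ℕ} (x : Fin r → F) :
    dotp 0 x = 0 := by simp [dotp]

private lemma dotp3 {F : Type*} [CommRing F] {r : ℕ} (v a c b : Fin r → F) :
    dotp v a + dotp v c + dotp (-(v + v)) b = dotp v (a + c - (b + b)) := by
  simp only [dotp, ← Finset.sum_add_distrib, ← Finset.sum_sub_distrib]
  refine Finset.sum_congr rfl fun i _ => ?_
  simp only [Pi.add_apply, Pi.neg_apply, Pi.sub_apply]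
  ring

set_option maxHeartbeats 1000000 in
/-- Orthogonality of characters on `Fin r → F`. -/
private lemma orth {F : Type} [Field F] [Fintype F] [DecidableEq F] {r : ℕ}
    (ψ : AddChar F ℂ) (hψ : ψ ≠ 1) (x : Fin r → F) :
    ∑ u : Fin r → F, ψ (dotp u x) =
      if x = 0 then ((Fintype.card F : ℂ)) ^ r else 0 := by
  classical
  have h1 : ∀ u : Fin r → F, ψ (dotp u x) = ∏ i, ψ (u i * x i) :=
    fun u => addChar_map_sum ψ _ _
  simp_rw [h1]
  rw [← Fintype.piFinset_univ,
    ← Finset.prod_univ_sum (t := fun _ : Fin r => (univ : Finset F))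
      (f := fun i t => ψ (t * x i))]
  by_cases hx : x = 0
  · subst hx
    simp
  · rw [if_neg hx]
    obtain ⟨i, hi⟩ := Function.ne_iff.1 hx
    apply Finset.prod_eq_zero (Finset.mem_univ i)
    have : ∑ t : F, ψ (t * x i) = ∑ s : F, ψ s :=
      Fintype.sum_equiv (Equiv.mulRight₀ (x i) hi) _ _ fun t => rfl
    rw [this]
    exact AddChar.sum_eq_zero_of_ne_one hψ

set_option maxHeartbeats 2000000 in
theorem stmt_0 (p n r : ℕ) (hp : p.Prime) (hodd : Odd p) (hn : 0 < n) (hr : 1 ≤ r)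
    (F : Type) [Field F] [Fintype F] (hF : Fintype.card F = p ^ n)
    (A : Set (Fin r → F)) (hA : ProgressionFree A)
    (α : ℝ) (hα : α = (((p : ℝ) ^ n) ^ r)⁻¹ * A.ncard) :
    ∃ (g : Fin r → F) (V : Submodule F (Fin r → F)),
      Module.finrank F ((Fin r → F) ⧸ V) = 1 ∧
      ((A ∩ ((g + ·) '' (V : Set (Fin r → F)))).ncard : ℝ) /
          ((V : Set (Fin r → F)).ncard : ℝ) ≥
        (α - (((p : ℝ) ^ n) ^ r)⁻¹) / (1 - α) := by
  classical
  -- ## Setup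
  -- 2 ≠ 0 in F
  have h2F : (2 : F) ≠ 0 := by
    intro h2
    haveI : CharP F (ringChar F) := ringChar.charP F
    obtain ⟨m, hpr, hcard⟩ := FiniteField.card F (ringChar F)
    rw [hF] at hcard
    have h1 : ringChar F ∣ p ^ n := hcard ▸ dvd_pow_self _ m.2.ne'
    have hrp : ringChar F = p := (Nat.prime_dvd_prime_iff_eq hpr hp).1 (hpr.dvd_of_dvd_pow h1)
    have hr2 : ringChar F ∣ 2 := ringChar.dvd (by exact_mod_cast h2)
    rw [hrp] at hr2
    have : p = 2 := (Nat.prime_dvd_prime_iff_eq hp Nat.prime_two).1 hr2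
    rw [this] at hodd
    simp [Nat.odd_iff] at hodd
  have htwo : ∀ x y : Fin r → F, x + x = y + y → x = y := by
    intro x y h
    funext i
    have h' := congrFun h i
    simp only [Pi.add_apply] at h'
    have : (2 : F) * x i = (2 : F) * y i := by linear_combination h'
    exact mul_left_cancel₀ h2F this
  -- the nontrivial character
  obtain ⟨ψ, hψ1⟩ := (AddChar.exists_apply_ne_zero (a := (1 : F))).2 one_ne_zero
  have hψne : ψ ≠ 1 := fun h => hψ1 (by simp [h])
  have hψsum : ∑ t : F, ψ t = 0 := AddChar.sum_eq_zero_of_ne_one hψne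
  have hψnorm : ∀ t : F, ‖ψ t‖ = 1 := fun t => by
    exact ψ.norm_apply t
  have hψconj : ∀ t : F, (starRingEnd ℂ) (ψ t) = ψ (-t) := fun t => by
    rw [← Complex.inv_eq_conj (hψnorm t), ← AddChar.map_neg_eq_inv]
  -- the finite set A' and its cardinality T
  set A' : Finset (Fin r → F) := (Set.toFinite A).toFinset with hA'
  have hmem : ∀ x : Fin r → F, x ∈ A' ↔ x ∈ A := fun x => Set.Finite.mem_toFinset _
  have hAcoe : (↑A' : Set (Fin r → F)) = A := Set.Finite.coe_toFinset _
  set T : ℕ := A'.card with hTdef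
  have hTn : A.ncard = T := by rw [← hAcoe, Set.ncard_coe_finset]
  set N : ℕ := Fintype.card (Fin r → F) with hNdef
  have hNval : N = (p ^ n) ^ r := by
    rw [hNdef, Fintype.card_fun, Fintype.card_fin, hF]
  have hTleN : T ≤ N := Finset.card_le_univ A'
  -- Fourier transform
  set S : (Fin r → F) → ℂ := fun v => ∑ a ∈ A', ψ (dotp v a) with hSdef
  have hS0 : S 0 = (T : ℂ) := by
    simp [hSdef, dotp_zero_left, hTdef]
  -- ## The triple counting identity
  have horth : ∀ x : Fin r → F,
      ∑ u : Fin r → F, ψ (dotp u x) = if x = 0 then ((N : ℂ)) else 0 := by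
    intro x
    rw [orth ψ hψne x]
    rcases eq_or_ne x 0 with h | h <;> simp [h, hNdef, Fintype.card_fun, Fintype.card_fin]
  have hTrip : ∑ v : Fin r → F, (S v) ^ 2 * S (-(v + v)) = (N : ℂ) * T := by
    have expand : ∀ v : Fin r → F, (S v) ^ 2 * S (-(v + v)) =
        ∑ a ∈ A', ∑ c ∈ A', ∑ b ∈ A', ψ (dotp v (b + c - (a + a))) := by
      intro v
      rw [sq, hSdef]
      simp only [Finset.sum_mul_sum, Finset.sum_mul, Finset.mul_sum]
      refine Finset.sum_congr rfl fun a _ => Finset.sum_congr rfl fun c _ =>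
        Finset.sum_congr rfl fun b _ => ?_
      rw [← AddChar.map_add_eq_mul, ← AddChar.map_add_eq_mul, dotp3]
    simp_rw [expand]
    rw [Finset.sum_comm]
    have step1 : ∀ a ∈ A',
        (∑ v : Fin r → F, ∑ c ∈ A', ∑ b ∈ A', ψ (dotp v (b + c - (a + a)))) =
        ∑ c ∈ A', ∑ b ∈ A', if b + c - (a + a) = 0 then (N : ℂ) else 0 := by
      intro a _
      rw [Finset.sum_comm]
      refine Finset.sum_congr rfl fun c _ => ?_
      rw [Finset.sum_comm]
      exact Finset.sum_congr rfl fun b _ => horth _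
    rw [Finset.sum_congr rfl step1]
    · -- now: ∑ a ∑ c ∑ b, ite (b + c - (a+a) = 0) N 0 = N * T
      have key : ∀ a ∈ A', (∑ c ∈ A', ∑ b ∈ A',
          if b + c - (a + a) = 0 then (N : ℂ) else 0) = (N : ℂ) := by
        intro a ha
        rw [Finset.sum_eq_single a]
        · rw [Finset.sum_eq_single a]
          · simp
          · intro b hb hba
            have hne : ¬ (b + a - (a + a) = 0) := by
              intro h
              apply hba
              have : b + a = a + a := sub_eq_zero.1 h
              exact add_right_cancel this
            exact if_neg hne
          · intro h; exact absurd ha h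
        · intro c hc hca
          apply Finset.sum_eq_zero
          intro b hb
          have hne : ¬ (b + c - (a + a) = 0) := by
            intro h
            have h' : b + c = a + a := sub_eq_zero.1 h
            have hbc : b = c := hA b ((hmem b).1 hb) a ((hmem a).1 ha) c ((hmem c).1 hc) h'
            rw [hbc] at h'
            exact hca (htwo c a h')
          exact if_neg hne
        · intro h; exact absurd ha h
      rw [Finset.sum_congr rfl key, Finset.sum_const, nsmul_eq_mul, mul_comm]
  -- ## Parseval
  have hPar : ∑ v : Fin r → F, (S v) * (starRingEnd ℂ) (S v) = (N : ℂ) * T := by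
    have expand : ∀ v : Fin r → F, (S v) * (starRingEnd ℂ) (S v) =
        ∑ a ∈ A', ∑ c ∈ A', ψ (dotp v (a - c)) := by
      intro v
      rw [hSdef]
      simp only [map_sum, Finset.sum_mul_sum]
      refine Finset.sum_congr rfl fun a _ => Finset.sum_congr rfl fun c _ => ?_
      rw [hψconj, ← AddChar.map_add_eq_mul, ← sub_eq_add_neg, ← dotp_sub]
    simp_rw [expand]
    rw [Finset.sum_comm]
    have step1 : ∀ a ∈ A',
        (∑ v : Fin r → F, ∑ c ∈ A', ψ (dotp v (a - c))) =
        ∑ c ∈ A', if a - c = 0 then (N : ℂ) else 0 := by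
      intro a _
      rw [Finset.sum_comm]
      exact Finset.sum_congr rfl fun c _ => horth _
    rw [Finset.sum_congr rfl step1]
    · have key : ∀ a ∈ A',
          (∑ c ∈ A', if a - c = 0 then (N : ℂ) else 0) = (N : ℂ) := by
        intro a ha
        rw [Finset.sum_eq_single a]
        · simp
        · intro c hc hca
          have hne : ¬ (a - c = 0) := fun h => hca (sub_eq_zero.1 h).symm
          exact if_neg hne
        · intro h; exact absurd ha h
      rw [Finset.sum_congr rfl key, Finset.sum_const, nsmul_eq_mul, mul_comm]
  have hPar2 : ∑ v : Fin r → F, ‖S v‖ ^ 2 = (N : ℝ) * T := by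
    have h2 : ∀ v : Fin r → F, S v * (starRingEnd ℂ) (S v) =
        ((‖S v‖ ^ 2 : ℝ) : ℂ) := fun v => by
      rw [Complex.mul_conj, Complex.sq_norm]
    rw [Finset.sum_congr rfl fun v _ => h2 v, ← Complex.ofReal_sum] at hPar
    exact_mod_cast hPar
  -- ## Choose the maximizing nonzero frequency u
  have hx0 : (Pi.single (⟨0, hr⟩ : Fin r) (1 : F) : Fin r → F) ≠ 0 := by
    intro h
    have := congrFun h ⟨0, hr⟩
    simp at this
  obtain ⟨u, hu_mem, hu_max⟩ := Finset.exists_max_image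
    ((univ : Finset (Fin r → F)).erase 0) (fun v => ‖S v‖)
    ⟨Pi.single (⟨0, hr⟩ : Fin r) (1 : F), by simp [hx0]⟩
  have hu : u ≠ 0 := (Finset.mem_erase.1 hu_mem).1
  set c : ℝ := ‖S u‖ with hcdef
  have hc0 : 0 ≤ c := by positivity
  -- ## The spectral bound
  have key2 : (T : ℝ) ^ 2 - N ≤ c * ((N : ℝ) - T) := by
    rcases le_or_gt ((T : ℝ) ^ 2) (N : ℝ) with h | h
    · have h1 : (0 : ℝ) ≤ (N : ℝ) - T := by
        have : (T : ℝ) ≤ N := by exact_mod_cast hTleN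
        linarith
      nlinarith
    · have hT1 : (1 : ℝ) ≤ (T : ℝ) := by
        have hN1 : (1 : ℝ) ≤ (N : ℝ) := by
          have h0 : 0 < N := Fintype.card_pos
          exact_mod_cast h0
        have hT0 : (0 : ℝ) ≤ (T : ℝ) := Nat.cast_nonneg T
        nlinarith
      have hsplit : ∑ v ∈ (univ : Finset (Fin r → F)).erase 0,
          (S v) ^ 2 * S (-(v + v)) = (N : ℂ) * T - (T : ℂ) ^ 3 := by
        have h' := hTrip
        rw [← Finset.sum_erase_add _ _ (Finset.mem_univ (0 : Fin r → F))] at h'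
        have hz : (S (0 : Fin r → F)) ^ 2 * S (-((0 : Fin r → F) + 0)) = (T : ℂ) ^ 3 := by
          rw [show -((0 : Fin r → F) + 0) = 0 by simp, hS0]
          ring
        rw [hz] at h'
        linear_combination h'
      have hsum_erase : ∑ v ∈ (univ : Finset (Fin r → F)).erase 0,
          ‖S v‖ ^ 2 = (N : ℝ) * T - (T : ℝ) ^ 2 := by
        have h' := hPar2
        rw [← Finset.sum_erase_add _ _ (Finset.mem_univ (0 : Fin r → F))] at h'
        rw [hS0] at h'
        have : ‖((T : ℂ))‖ ^ 2 = (T : ℝ) ^ 2 := by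
          rw [Complex.norm_natCast]
        rw [this] at h'
        linarith
      have hb : (T : ℝ) ^ 3 - (N : ℝ) * T ≤ c * ((N : ℝ) * T - (T : ℝ) ^ 2) := by
        have habs : ‖((N : ℂ) * T - (T : ℂ) ^ 3)‖ = (T : ℝ) ^ 3 - (N : ℝ) * T := by
          have hcast : (N : ℂ) * T - (T : ℂ) ^ 3 = (((N : ℝ) * T - (T : ℝ) ^ 3 : ℝ) : ℂ) := by
            push_cast; ring
          rw [hcast, Complex.norm_real, Real.norm_eq_abs, abs_of_nonpos (by nlinarith)]
          ring
        calc (T : ℝ) ^ 3 - (N : ℝ) * T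
            = ‖((N : ℂ) * T - (T : ℂ) ^ 3)‖ := habs.symm
          _ = ‖(∑ v ∈ (univ : Finset (Fin r → F)).erase 0,
                (S v) ^ 2 * S (-(v + v)))‖ := by rw [hsplit]
          _ ≤ ∑ v ∈ (univ : Finset (Fin r → F)).erase 0,
                ‖((S v) ^ 2 * S (-(v + v)))‖ := norm_sum_le _ _
          _ ≤ ∑ v ∈ (univ : Finset (Fin r → F)).erase 0, ‖S v‖ ^ 2 * c := by
              refine Finset.sum_le_sum fun v hv => ?_
              rw [norm_mul, norm_pow]
              have hv0 : v ≠ 0 := (Finset.mem_erase.1 hv).1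
              have hmem2 : -(v + v) ∈ (univ : Finset (Fin r → F)).erase 0 := by
                simp only [Finset.mem_erase, Finset.mem_univ, and_true]
                intro hvv
                apply hv0
                have : v + v = 0 := by rwa [neg_eq_zero] at hvv
                exact htwo v 0 (by simpa using this)
              exact mul_le_mul_of_nonneg_left (hu_max _ hmem2) (by positivity)
          _ = c * ((N : ℝ) * T - (T : ℝ) ^ 2) := by
              rw [← Finset.sum_mul, hsum_erase, mul_comm]
      nlinarith
  -- ## Fibers of the linear form x ↦ dotp u x
  set m : F → ℕ := fun t => (A'.filter fun x => dotp u x = t).card with hmdef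
  have hmsum : ∑ t : F, m t = T := by
    rw [hTdef, Finset.card_eq_sum_card_fiberwise
      (f := fun x => dotp u x) (t := univ) (fun x _ => Finset.mem_univ _)]
  have hSu : S u = ∑ t : F, (m t : ℂ) * ψ t := by
    show (∑ a ∈ A', ψ (dotp u a)) = _
    rw [← Finset.sum_fiberwise_of_maps_to
      (g := fun x => dotp u x) (t := univ) (fun x _ => Finset.mem_univ _) (fun x => ψ (dotp u x))]
    refine Finset.sum_congr rfl fun t _ => ?_
    rw [Finset.sum_congr rfl fun x hx => ?_, Finset.sum_const, nsmul_eq_mul]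
    rw [(Finset.mem_filter.1 hx).2]
  obtain ⟨t1, _, hM⟩ := Finset.exists_max_image (univ : Finset F) m ⟨0, Finset.mem_univ 0⟩
  set M : ℕ := m t1 with hMdef
  -- ## The pigeonhole: c + T ≤ q * M
  obtain ⟨θ, hθ1, hθ2⟩ : ∃ θ : ℂ, ‖θ‖ = 1 ∧ (starRingEnd ℂ) θ * S u = (c : ℂ) := by
    rcases eq_or_ne (S u) 0 with h | h
    · exact ⟨1, by simp, by simp [h, hcdef]⟩
    · have hcne : (c : ℂ) ≠ 0 := by
        simp only [ne_eq, Complex.ofReal_eq_zero, hcdef]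
        exact fun hh => h (by rwa [norm_eq_zero] at hh)
      refine ⟨S u / (c : ℂ), ?_, ?_⟩
      · have hc0' : c ≠ 0 := fun hh => h (by rwa [hcdef, norm_eq_zero] at hh)
        rw [norm_div, Complex.norm_real, Real.norm_eq_abs, abs_of_nonneg hc0, ← hcdef, div_self hc0']
      · rw [map_div₀, Complex.conj_ofReal, div_mul_eq_mul_div, mul_comm,
          Complex.mul_conj]
        rw [show Complex.normSq (S u) = c ^ 2 by rw [← Complex.sq_norm, hcdef]]
        push_cast
        field_simp
  have hre : c + T = ∑ t : F, (m t : ℝ) * (1 + ((starRingEnd ℂ) θ * ψ t).re) := by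
    have hcx : (c : ℂ) + T = ∑ t : F, (m t : ℂ) * (1 + (starRingEnd ℂ) θ * ψ t) := by
      have hrhs : ∑ t : F, (m t : ℂ) * (1 + (starRingEnd ℂ) θ * ψ t) =
          (∑ t : F, (m t : ℂ)) + (starRingEnd ℂ) θ * ∑ t : F, (m t : ℂ) * ψ t := by
        rw [Finset.mul_sum, ← Finset.sum_add_distrib]
        exact Finset.sum_congr rfl fun t _ => by ring
      rw [hrhs, ← hSu, hθ2]
      have : ∑ t : F, (m t : ℂ) = (T : ℂ) := by exact_mod_cast congrArg (Nat.cast : ℕ → ℂ) hmsum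
      rw [this]
      ring
    have := congrArg Complex.re hcx
    simpa [Complex.re_sum, Complex.re_ofReal_mul] using this
  have hMq : c + T ≤ (Fintype.card F : ℝ) * M := by
    rw [hre]
    have hwt : ∀ t : F, (0 : ℝ) ≤ 1 + ((starRingEnd ℂ) θ * ψ t).re := by
      intro t
      have habs : ‖((starRingEnd ℂ) θ * ψ t)‖ = 1 := by
        rw [norm_mul, Complex.norm_conj, hθ1, hψnorm, mul_one]
      have h1 := Complex.abs_re_le_norm ((starRingEnd ℂ) θ * ψ t)
      rw [habs] at h1
      have := neg_abs_le (((starRingEnd ℂ) θ * ψ t).re)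
      linarith
    calc ∑ t : F, (m t : ℝ) * (1 + ((starRingEnd ℂ) θ * ψ t).re)
        ≤ ∑ t : F, (M : ℝ) * (1 + ((starRingEnd ℂ) θ * ψ t).re) := by
          refine Finset.sum_le_sum fun t _ => ?_
          exact mul_le_mul_of_nonneg_right (by exact_mod_cast hM t (Finset.mem_univ t)) (hwt t)
      _ = (M : ℝ) * ((Fintype.card F : ℝ) + ((starRingEnd ℂ) θ * ∑ t : F, ψ t).re) := by
          rw [← Finset.mul_sum]
          congr 1
          rw [Finset.sum_add_distrib, Finset.sum_const, Finset.card_univ, nsmul_eq_mul, mul_one]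
          congr 1
          rw [Finset.mul_sum, Complex.re_sum]
      _ = (Fintype.card F : ℝ) * M := by rw [hψsum]; simp [mul_comm]
  -- ## The linear form and the hyperplane
  have hsurj : ∀ w : F, ∃ x : Fin r → F, dotp u x = w := by
    intro w
    obtain ⟨i, hi⟩ := Function.ne_iff.1 hu
    have hi' : u i ≠ 0 := by simpa using hi
    refine ⟨Pi.single i ((u i)⁻¹ * w), ?_⟩
    rw [dotp, Finset.sum_eq_single i]
    · rw [Pi.single_eq_same, ← mul_assoc, mul_inv_cancel₀ hi', one_mul]
    · intro j _ hj
      rw [Pi.single_eq_of_ne hj, mul_zero]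
    · intro hh; exact absurd (Finset.mem_univ i) hh
  set ℓ : (Fin r → F) →ₗ[F] F :=
    { toFun := fun x => dotp u x
      map_add' := fun x y => dotp_add u x y
      map_smul' := fun t x => by
        simp only [RingHom.id_apply, dotp, smul_eq_mul, Finset.mul_sum]
        exact Finset.sum_congr rfl fun i _ => by
          simp only [Pi.smul_apply, smul_eq_mul]; ring } with hldef
  have hlapp : ∀ x : Fin r → F, ℓ x = dotp u x := fun x => rfl
  set V : Submodule F (Fin r → F) := LinearMap.ker ℓ with hVdef
  have hrange : LinearMap.range ℓ = ⊤ := LinearMap.range_eq_top.2 (fun w => hsurj w)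
  have hfinrank : Module.finrank F ((Fin r → F) ⧸ V) = 1 := by
    have e : ((Fin r → F) ⧸ V) ≃ₗ[F] F :=
      (LinearMap.quotKerEquivRange ℓ).trans (LinearEquiv.ofTop _ hrange)
    rw [e.finrank_eq, Module.finrank_self]
  obtain ⟨g, hg⟩ := hsurj t1
  -- the intersection with the coset g + V
  have hset : A ∩ ((g + ·) '' (V : Set (Fin r → F))) =
      ↑(A'.filter fun x => dotp u x = t1) := by
    ext x
    simp only [Set.mem_inter_iff, Set.mem_image, SetLike.mem_coe, Finset.coe_filter,
      Set.mem_setOf_eq, hVdef, LinearMap.mem_ker]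
    constructor
    · rintro ⟨hxA, v, hv, rfl⟩
      refine ⟨(hmem _).2 hxA, ?_⟩
      have hv' : dotp u v = 0 := hv
      rw [dotp_add, hv', add_zero, hg]
    · rintro ⟨hxA', hx⟩
      refine ⟨(hmem x).1 hxA', x - g, ?_, by simp⟩
      rw [hlapp, dotp_sub, hx, hg, sub_self]
  have hcard1 : (A ∩ ((g + ·) '' (V : Set (Fin r → F)))).ncard = m t1 := by
    rw [hset, Set.ncard_coe_finset]
  -- cardinality of V and the fibers
  set k : ℕ := ((univ : Finset (Fin r → F)).filter fun x => dotp u x = 0).card with hkdef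
  have hVcard : (V : Set (Fin r → F)).ncard = k := by
    have : (V : Set (Fin r → F)) =
        ↑((univ : Finset (Fin r → F)).filter fun x => dotp u x = 0) := by
      ext x
      simp only [SetLike.mem_coe, hVdef, LinearMap.mem_ker, Finset.coe_filter,
        Set.mem_setOf_eq, Finset.mem_univ, true_and]
      exact Iff.rfl
    rw [this, Set.ncard_coe_finset]
  have hk0 : 0 < k := by
    rw [hkdef]
    refine Finset.card_pos.2 ⟨0, Finset.mem_filter.2 ⟨Finset.mem_univ _, dotp_zero_right u⟩⟩
  have hfib : ∀ t : F, ((univ : Finset (Fin r → F)).filter fun x => dotp u x = t).card = k := by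
    intro t
    obtain ⟨gt, hgt⟩ := hsurj t
    rw [hkdef]
    apply Finset.card_bij' (fun x _ => x - gt) (fun y _ => y + gt)
    · intro x hx
      simp only [Finset.mem_filter, Finset.mem_univ, true_and] at hx ⊢
      rw [dotp_sub, hx, hgt, sub_self]
    · intro y hy
      simp only [Finset.mem_filter, Finset.mem_univ, true_and] at hy ⊢
      rw [dotp_add, hy, hgt, zero_add]
    · intro x _; simp
    · intro y _; simp
  have hNk : N = Fintype.card F * k := by
    rw [hNdef, ← Finset.card_univ, Finset.card_eq_sum_card_fiberwise
      (f := fun x => dotp u x) (t := univ) (fun x _ => Finset.mem_univ _)]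
    rw [Finset.sum_congr rfl fun t _ => hfib t, Finset.sum_const, Finset.card_univ,
      smul_eq_mul]
  -- ## Final arithmetic
  have hTltN : T < N := by
    rcases lt_or_eq_of_le hTleN with h | h
    · exact h
    · exfalso
      have hAuniv : A' = univ := Finset.eq_univ_of_card A' h
      have hall : ∀ x : Fin r → F, x ∈ A := fun x => (hmem x).1 (hAuniv ▸ Finset.mem_univ x)
      set x0 : Fin r → F := Pi.single (⟨0, hr⟩ : Fin r) (1 : F) with hx0def
      have h0 : (0 : Fin r → F) = x0 + x0 → False := by
        intro hh
        have := congrFun hh ⟨0, hr⟩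
        simp only [Pi.zero_apply, Pi.add_apply, hx0def, Pi.single_eq_same] at this
        exact h2F (by linear_combination -this)
      exact h0 (hA 0 (hall 0) x0 (hall x0) (x0 + x0) (hall _) (by rw [zero_add]))
  -- real versions
  have hNR : (0 : ℝ) < (N : ℝ) - T := by
    have : (T : ℝ) < N := by exact_mod_cast hTltN
    linarith
  have hkR : (0 : ℝ) < (k : ℝ) := by exact_mod_cast hk0
  have hqR : (0 : ℝ) < (Fintype.card F : ℝ) := by
    have : 0 < Fintype.card F := Fintype.card_pos
    exact_mod_cast this
  have hmain : ((T : ℝ) - 1) / ((N : ℝ) - T) ≤ (M : ℝ) / (k : ℝ) := by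
    rw [div_le_div_iff₀ hNR hkR]
    have h1 : (c + T) * ((N : ℝ) - T) ≤ ((Fintype.card F : ℝ) * M) * ((N : ℝ) - T) :=
      mul_le_mul_of_nonneg_right hMq (le_of_lt hNR)
    have e : (c + T) * ((N : ℝ) - T) =
        c * ((N : ℝ) - T) + ((T : ℝ) * N - (T : ℝ) ^ 2) := by ring
    have h2 : (N : ℝ) * ((T : ℝ) - 1) ≤ (c + T) * ((N : ℝ) - T) := by
      rw [e]
      have e2 : (N : ℝ) * ((T : ℝ) - 1) = (T : ℝ) * N - (T : ℝ) ^ 2 + ((T : ℝ) ^ 2 - N) := by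
        ring
      rw [e2]
      linarith [key2]
    have hNkR : (N : ℝ) = (Fintype.card F : ℝ) * k := by exact_mod_cast hNk
    have h3 : (Fintype.card F : ℝ) * (((T : ℝ) - 1) * k) ≤
        (Fintype.card F : ℝ) * ((M : ℝ) * ((N : ℝ) - T)) := by
      have h4 : (N : ℝ) * ((T : ℝ) - 1) ≤ ((Fintype.card F : ℝ) * M) * ((N : ℝ) - T) :=
        le_trans h2 h1
      calc (Fintype.card F : ℝ) * (((T : ℝ) - 1) * k)
          = (N : ℝ) * ((T : ℝ) - 1) := by rw [hNkR]; ring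
        _ ≤ ((Fintype.card F : ℝ) * M) * ((N : ℝ) - T) := h4
        _ = (Fintype.card F : ℝ) * ((M : ℝ) * ((N : ℝ) - T)) := by ring
    exact le_of_mul_le_mul_left h3 hqR
  -- identify α and the target
  have hcast : ((p : ℝ) ^ n) ^ r = (N : ℝ) := by
    rw [hNval]; push_cast; ring
  have hαT : α = (T : ℝ) / (N : ℝ) := by
    rw [hα, hTn, hcast, inv_mul_eq_div]
  have hN0 : (N : ℝ) ≠ 0 := by positivity
  have h2α : α - (((p : ℝ) ^ n) ^ r)⁻¹ = ((T : ℝ) - 1) / N := by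
    rw [hαT, hcast, div_sub' hN0]
    congr 1
    field_simp
  have h1α : 1 - α = ((N : ℝ) - T) / N := by
    rw [hαT]
    field_simp
  have hRHS : (α - (((p : ℝ) ^ n) ^ r)⁻¹) / (1 - α) = ((T : ℝ) - 1) / ((N : ℝ) - T) := by
    rw [h2α, h1α, div_eq_div_iff (by positivity : ((N : ℝ) - T) / N ≠ 0) (ne_of_gt hNR)]
    ring
  refine ⟨g, V, hfinrank, ?_⟩
  rw [hcard1, hVcard, hRHS]
  exact hmain
end

section
/- There exists an absolute constant $C > 0$ such that for every power $q$ of an odd prime, every integer $r \ge 1$, and every progression-free subset $A \subseteq \mathbb{F}_q^r$, the density of $A$ satisfies $q^{-r}|A| \le C/r$. -/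
open Finset

namespace MeshAux

variable {p : ℕ} [hpf : Fact p.Prime]

/-- Sum of a nontrivial additive character over a finite group vanishes. -/
lemma sum_addChar_eq_zero {G : Type*} [AddCommGroup G] [Fintype G]
    (χ : AddChar G ℂ) {x : G} (hx : χ x ≠ 1) : ∑ g, χ g = 0 := by
  refine eq_zero_of_mul_eq_self_left hx ?_
  rw [Finset.mul_sum]
  exact Fintype.sum_equiv (Equiv.addLeft x) _ _ fun y ↦ (AddChar.map_add_eq_mul ..).symm

noncomputable def ζ (p : ℕ) : ℂ := Complex.exp (2 * Real.pi * Complex.I / p)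

lemma ζ_prim (p : ℕ) (hp : p ≠ 0) : IsPrimitiveRoot (ζ p) p :=
  Complex.isPrimitiveRoot_exp p hp

noncomputable def ψ (p : ℕ) [hpf : Fact p.Prime] : AddChar (ZMod p) ℂ :=
  AddChar.zmodChar p (ζ_prim p hpf.out.ne_zero).pow_eq_one

lemma ψ_apply (t : ZMod p) : ψ p t = ζ p ^ t.val := rfl

lemma ψ_eq_one_iff (t : ZMod p) : ψ p t = 1 ↔ t = 0 := by
  rw [ψ_apply, (ζ_prim p hpf.out.ne_zero).pow_eq_one_iff_dvd]
  constructor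
  · intro h
    exact (ZMod.val_eq_zero t).mp (Nat.eq_zero_of_dvd_of_lt h (ZMod.val_lt t))
  · intro h; simp [h]

lemma norm_ζ : ‖ζ p‖ = 1 := by
  have h : (2 * Real.pi * Complex.I / p) = ((2 * Real.pi / p : ℝ) : ℂ) * Complex.I := by
    push_cast; ring
  rw [ζ, h, Complex.norm_exp_ofReal_mul_I]

lemma norm_ψ (t : ZMod p) : ‖ψ p t‖ = 1 := by
  rw [ψ_apply, norm_pow, norm_ζ, one_pow]

lemma ψ_ne_zero (t : ZMod p) : ψ p t ≠ 0 := by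
  intro h; have := norm_ψ (p := p) t; rw [h] at this; simp at this

lemma conj_ψ (t : ZMod p) : (starRingEnd ℂ) (ψ p t) = ψ p (-t) := by
  have h1 : ψ p (-t) * ψ p t = 1 := by
    rw [← AddChar.map_add_eq_mul]; simp
  have h2 : (starRingEnd ℂ) (ψ p t) * ψ p t = 1 := by
    rw [mul_comm, Complex.mul_conj, Complex.normSq_eq_norm_sq, norm_ψ]
    norm_num
  exact mul_right_cancel₀ (ψ_ne_zero t) (h2.trans h1.symm)

end MeshAux

namespace MeshAux

variable {p : ℕ} [hpf : Fact p.Prime] {m : ℕ}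

def Dot (x ξ : Fin m → ZMod p) : ZMod p := ∑ i, x i * ξ i

lemma Dot_add_right (x ξ η : Fin m → ZMod p) : Dot x (ξ + η) = Dot x ξ + Dot x η := by
  simp [Dot, mul_add, Finset.sum_add_distrib]

lemma Dot_zero_right (x : Fin m → ZMod p) : Dot x 0 = 0 := by simp [Dot]

def DotHom (x : Fin m → ZMod p) : (Fin m → ZMod p) →+ ZMod p where
  toFun := Dot x
  map_zero' := Dot_zero_right x
  map_add' := Dot_add_right x

noncomputable def E (x : Fin m → ZMod p) : AddChar (Fin m → ZMod p) ℂ :=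
  (ψ p).compAddMonoidHom (DotHom x)

lemma E_apply (x ξ : Fin m → ZMod p) : E x ξ = ψ p (Dot x ξ) := rfl

lemma card_W : Fintype.card (Fin m → ZMod p) = p ^ m := by
  simp [ZMod.card]

lemma orth {x : Fin m → ZMod p} (hx : x ≠ 0) : ∑ ξ : Fin m → ZMod p, ψ p (Dot x ξ) = 0 := by
  obtain ⟨i, hi⟩ : ∃ i, x i ≠ 0 := by
    by_contra h; push_neg at h; exact hx (funext h)
  have hwit : E x (Pi.single i 1) ≠ 1 := by
    rw [E_apply, Ne, ψ_eq_one_iff]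
    have : Dot x (Pi.single i 1) = x i := by
      rw [Dot, Finset.sum_eq_single i]
      · simp
      · intro j _ hj; simp [Pi.single_apply, hj]
      · simp
    rw [this]; exact hi
  exact sum_addChar_eq_zero (E x) hwit

lemma orth0 : ∑ ξ : Fin m → ZMod p, ψ p (Dot (0 : Fin m → ZMod p) ξ) = (p:ℂ) ^ m := by
  have : ∀ ξ : Fin m → ZMod p, ψ p (Dot (0 : Fin m → ZMod p) ξ) = 1 := by
    intro ξ; simp [Dot]
  rw [Finset.sum_congr rfl (fun ξ _ => this ξ)]
  simp [card_W]

lemma orth_ite (x : Fin m → ZMod p) :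
    ∑ ξ : Fin m → ZMod p, ψ p (Dot x ξ) = if x = 0 then (p:ℂ) ^ m else 0 := by
  split_ifs with h
  · subst h; exact orth0
  · exact orth h

end MeshAux

namespace MeshAux

variable {p : ℕ} [hpf : Fact p.Prime] {m : ℕ}

lemma two_ne_zero' (hodd : Odd p) : (2 : ZMod p) ≠ 0 := by
  have : ((2:ℕ) : ZMod p) ≠ 0 := by
    rw [Ne, ZMod.natCast_eq_zero_iff]
    intro h
    have := (Nat.prime_dvd_prime_iff_eq hpf.out Nat.prime_two).mp h
    rcases hodd with ⟨k, hk⟩; omega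
  simpa using this

noncomputable def Fc (A : Finset (Fin m → ZMod p)) (ξ : Fin m → ZMod p) : ℂ :=
  ∑ a ∈ A, ψ p (Dot a ξ)

lemma Dot_sub_left (a b ξ : Fin m → ZMod p) : Dot (a - b) ξ = Dot a ξ - Dot b ξ := by
  simp [Dot, sub_mul, Finset.sum_sub_distrib]

lemma Dot_smul_right (c : ZMod p) (x ξ : Fin m → ZMod p) : Dot x (c • ξ) = c * Dot x ξ := by
  simp [Dot, Finset.mul_sum]; exact Finset.sum_congr rfl fun i _ => by ring

lemma triple_eq (a c b ξ : Fin m → ZMod p) :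
    ψ p (Dot a ξ) * ψ p (Dot c ξ) * ψ p (Dot b ((-2 : ZMod p) • ξ)) =
      ψ p (Dot (a + c - (b + b)) ξ) := by
  rw [mul_assoc, ← AddChar.map_add_eq_mul, ← AddChar.map_add_eq_mul]
  congr 1
  unfold Dot
  rw [← Finset.sum_add_distrib, ← Finset.sum_add_distrib]
  refine Finset.sum_congr rfl fun i _ => ?_
  simp only [Pi.add_apply, Pi.sub_apply, Pi.smul_apply, smul_eq_mul]
  ring

lemma conj_Fc (A : Finset (Fin m → ZMod p)) (ξ : Fin m → ZMod p) :
    (starRingEnd ℂ) (Fc A ξ) = ∑ a ∈ A, ψ p (-(Dot a ξ)) := by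
  rw [Fc, map_sum]
  exact Finset.sum_congr rfl fun a _ => conj_ψ _

lemma parseval (A : Finset (Fin m → ZMod p)) :
    ∑ ξ : Fin m → ZMod p, (Complex.normSq (Fc A ξ) : ℂ) = (p:ℂ)^m * A.card := by
  have : ∀ ξ : Fin m → ZMod p, (Complex.normSq (Fc A ξ) : ℂ)
      = ∑ a ∈ A, ∑ b ∈ A, ψ p (Dot (a - b) ξ) := by
    intro ξ
    rw [← Complex.mul_conj, conj_Fc, Fc, Finset.sum_mul_sum]
    refine Finset.sum_congr rfl fun a _ => Finset.sum_congr rfl fun b _ => ?_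
    rw [Dot_sub_left, sub_eq_add_neg, AddChar.map_add_eq_mul]
  rw [Finset.sum_congr rfl fun ξ _ => this ξ, Finset.sum_comm]
  have swap : ∀ a ∈ A, ∑ ξ : Fin m → ZMod p, ∑ b ∈ A, ψ p (Dot (a-b) ξ)
      = (p:ℂ)^m := by
    intro a ha
    rw [Finset.sum_comm]
    have : ∀ b ∈ A, ∑ ξ : Fin m → ZMod p, ψ p (Dot (a-b) ξ)
        = if a - b = 0 then (p:ℂ)^m else 0 := fun b _ => orth_ite _
    rw [Finset.sum_congr rfl this]
    have : ∀ b ∈ A, (if a - b = 0 then (p:ℂ)^m else 0) = if b = a then (p:ℂ)^m else 0 := by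
      intro b _
      congr 1
      simp [sub_eq_zero, eq_comm]
    rw [Finset.sum_congr rfl this, Finset.sum_ite_eq' A a, if_pos ha]
  rw [Finset.sum_congr rfl swap, Finset.sum_const, nsmul_eq_mul]
  ring

end MeshAux

namespace MeshAux

variable {p : ℕ} [hpf : Fact p.Prime] {m : ℕ}

lemma count_identity (hodd : Odd p) (A : Finset (Fin m → ZMod p))
    (hA : ProgressionFree (A : Set (Fin m → ZMod p))) :
    ∑ ξ : Fin m → ZMod p, (Fc A ξ)^2 * Fc A ((-2 : ZMod p) • ξ) = (p:ℂ)^m * A.card := by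
  classical
  have expand : ∀ ξ : Fin m → ZMod p, (Fc A ξ)^2 * Fc A ((-2 : ZMod p) • ξ)
      = ∑ a ∈ A, ∑ c ∈ A, ∑ b ∈ A, ψ p (Dot (a + c - (b + b)) ξ) := by
    intro ξ
    simp only [Fc, sq]
    rw [Finset.sum_mul_sum, Finset.sum_mul]
    refine Finset.sum_congr rfl fun a _ => ?_
    rw [Finset.sum_mul]
    refine Finset.sum_congr rfl fun c _ => ?_
    rw [Finset.mul_sum]
    exact Finset.sum_congr rfl fun b _ => triple_eq a c b ξ
  rw [Finset.sum_congr rfl (fun ξ _ => expand ξ), Finset.sum_comm]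
  have inner : ∀ a ∈ A, ∑ ξ : Fin m → ZMod p, ∑ c ∈ A, ∑ b ∈ A,
      ψ p (Dot (a + c - (b + b)) ξ) = (p:ℂ)^m := by
    intro a ha
    rw [Finset.sum_comm]
    have h1 : ∀ c ∈ A, ∑ ξ : Fin m → ZMod p, ∑ b ∈ A, ψ p (Dot (a + c - (b + b)) ξ)
        = ∑ b ∈ A, if c = a ∧ b = a then (p:ℂ)^m else 0 := by
      intro c hc
      rw [Finset.sum_comm]
      refine Finset.sum_congr rfl fun b hb => ?_
      rw [orth_ite]
      congr 1
      rw [sub_eq_zero, eq_iff_iff]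
      constructor
      · intro h
        have hac : a = c := hA a ha b hb c hc h
        subst hac
        have hb' : b = a := by
          funext i
          have := congr_fun h i
          simp only [Pi.add_apply] at this
          have h2 : (2 : ZMod p) * a i = 2 * b i := by rw [two_mul, two_mul]; exact this
          exact (mul_left_cancel₀ (two_ne_zero' hodd) h2).symm
        exact ⟨rfl, hb'⟩
      · rintro ⟨rfl, rfl⟩; rfl
    rw [Finset.sum_congr rfl h1]
    have h2 : ∑ c ∈ A, ∑ b ∈ A, (if c = a ∧ b = a then (p:ℂ)^m else 0)
        = ∑ x ∈ A ×ˢ A, (if x = (a, a) then (p:ℂ)^m else 0) := by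
      rw [Finset.sum_product]
      refine Finset.sum_congr rfl fun c _ => Finset.sum_congr rfl fun b _ => ?_
      congr 1
      simp [Prod.ext_iff]
    rw [h2, Finset.sum_ite_eq' (A ×ˢ A) (a,a), if_pos (Finset.mem_product.mpr ⟨ha, ha⟩)]
  rw [Finset.sum_congr rfl inner, Finset.sum_const, nsmul_eq_mul]
  ring

end MeshAux

namespace MeshAux

variable {p : ℕ} [hpf : Fact p.Prime] {m : ℕ}

lemma parseval_real (A : Finset (Fin m → ZMod p)) :
    ∑ ξ : Fin m → ZMod p, ‖Fc A ξ‖^2 = (p:ℝ)^m * A.card := by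
  have h := parseval A
  have h2 : ∑ ξ : Fin m → ZMod p, (Complex.normSq (Fc A ξ) : ℂ)
      = ((∑ ξ : Fin m → ZMod p, ‖Fc A ξ‖^2 : ℝ) : ℂ) := by
    push_cast
    refine Finset.sum_congr rfl fun ξ _ => ?_
    rw [Complex.normSq_eq_norm_sq]
    push_cast
    ring
  rw [h2] at h
  exact_mod_cast h

lemma Fc_zero (A : Finset (Fin m → ZMod p)) : Fc A 0 = (A.card : ℂ) := by
  unfold Fc
  rw [Finset.sum_congr rfl fun a _ => by rw [Dot_zero_right, AddChar.map_zero_eq_one]]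
  simp

lemma exists_large_coeff (hodd : Odd p) {m : ℕ} (A : Finset (Fin (m+1) → ZMod p))
    (hA : ProgressionFree (A : Set (Fin (m+1) → ZMod p)))
    (hpos : 0 < A.card) :
    ∃ ξ : Fin (m+1) → ZMod p, ξ ≠ 0 ∧
      (A.card : ℝ)^2 / (p:ℝ)^(m+1) - 1 ≤ ‖Fc A ξ‖ := by
  classical
  set a : ℝ := (A.card : ℝ) with ha_def
  have hp0 : (0:ℝ) < p := by exact_mod_cast hpf.out.pos
  have hN : (0:ℝ) < (p:ℝ)^(m+1) := by positivity
  have ha : 0 < a := by rw [ha_def]; exact_mod_cast hpos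
  set S : Finset (Fin (m+1) → ZMod p) := Finset.univ.erase 0 with hS_def
  have hS : S.Nonempty := by
    refine ⟨Pi.single 0 1, Finset.mem_erase.mpr ⟨?_, Finset.mem_univ _⟩⟩
    intro h
    have := congr_fun h 0
    simp at this
  set M : ℝ := S.sup' hS (fun ξ => ‖Fc A ξ‖) with hM_def
  have hMle : ∀ ξ ∈ S, ‖Fc A ξ‖ ≤ M := fun ξ hξ => Finset.le_sup' (f := fun ξ => ‖Fc A ξ‖) hξ
  -- split the identity
  have hid := count_identity hodd A hA
  have hsplit : (Fc A (0:Fin (m+1) → ZMod p))^2 * Fc A ((-2:ZMod p) • (0:Fin (m+1) → ZMod p))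
      + ∑ ξ ∈ S, (Fc A ξ)^2 * Fc A ((-2:ZMod p) • ξ) = (p:ℂ)^(m+1) * A.card := by
    rw [← hid, hS_def]
    exact Finset.add_sum_erase _ (fun ξ => (Fc A ξ)^2 * Fc A ((-2:ZMod p) • ξ)) (Finset.mem_univ _)
  rw [smul_zero, Fc_zero] at hsplit
  set R : ℂ := ∑ ξ ∈ S, (Fc A ξ)^2 * Fc A ((-2:ZMod p) • ξ) with hR_def
  have hR : R = (p:ℂ)^(m+1) * A.card - (A.card:ℂ)^2 * A.card := by
    rw [← hsplit]; ring
  have hnormR : a^3 - (p:ℝ)^(m+1) * a ≤ ‖R‖ := by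
    calc a^3 - (p:ℝ)^(m+1) * a ≤ |a^3 - (p:ℝ)^(m+1) * a| := le_abs_self _
    _ = ‖((a^3 - (p:ℝ)^(m+1) * a : ℝ) : ℂ)‖ := (Complex.norm_real _).symm
    _ = ‖-R‖ := by rw [hR, ha_def]; congr 1; push_cast; ring
    _ = ‖R‖ := norm_neg R
  have hRle : ‖R‖ ≤ M * ((p:ℝ)^(m+1) * a - a^2) := by
    have h1 : ‖R‖ ≤ ∑ ξ ∈ S, ‖Fc A ξ‖^2 * M := by
      refine (norm_sum_le _ _).trans (Finset.sum_le_sum fun ξ hξ => ?_)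
      rw [norm_mul, norm_pow]
      refine mul_le_mul_of_nonneg_left ?_ (by positivity)
      refine hMle _ ?_
      rw [hS_def, Finset.mem_erase]
      refine ⟨?_, Finset.mem_univ _⟩
      have hξ0 : ξ ≠ 0 := (Finset.mem_erase.mp hξ).1
      rw [Ne, smul_eq_zero]
      push_neg
      exact ⟨neg_ne_zero.mpr (two_ne_zero' hodd), hξ0⟩
    have h2 : ∑ ξ ∈ S, ‖Fc A ξ‖^2 * M = (∑ ξ ∈ S, ‖Fc A ξ‖^2) * M := by
      rw [Finset.sum_mul]
    have h3 : ∑ ξ ∈ S, ‖Fc A ξ‖^2 = (p:ℝ)^(m+1) * a - a^2 := by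
      have hpar := parseval_real A
      have h4 : ‖Fc A (0 : Fin (m+1) → ZMod p)‖^2 + ∑ ξ ∈ S, ‖Fc A ξ‖^2
          = ∑ ξ : Fin (m+1) → ZMod p, ‖Fc A ξ‖^2 := by
        rw [hS_def]
        exact Finset.add_sum_erase _ (fun ξ => ‖Fc A ξ‖^2) (Finset.mem_univ _)
      rw [Fc_zero, Complex.norm_natCast, ← ha_def] at h4
      rw [← h4] at hpar
      nlinarith [hpar]
    rw [h2, h3] at h1
    linarith [h1]
  -- conclude M is large
  have hM0 : 0 ≤ M := le_trans (norm_nonneg _) (hMle _ hS.choose_spec)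
  have hMbig : a^2 / (p:ℝ)^(m+1) - 1 ≤ M := by
    have key : a^3 - (p:ℝ)^(m+1)*a ≤ M * ((p:ℝ)^(m+1) * a) := by
      nlinarith [hnormR.trans hRle]
    rw [div_sub' (ne_of_gt hN), div_le_iff₀ hN]
    nlinarith [key, ha]
  obtain ⟨ξ, hξS, hξ⟩ := Finset.exists_mem_eq_sup' hS (fun ξ => ‖Fc A ξ‖)
  refine ⟨ξ, (Finset.mem_erase.mp hξS).1, ?_⟩
  rw [hM_def, hξ] at hMbig
  rw [ha_def] at hMbig
  exact hMbig

end MeshAux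

namespace MeshAux

variable {p : ℕ} [hpf : Fact p.Prime] {m : ℕ}

lemma exists_dense_slice (A : Finset (Fin m → ZMod p)) (ξ : Fin m → ZMod p)
    (hM : 0 < ‖Fc A ξ‖) :
    ∃ t : ZMod p,
      (A.card : ℝ)/p + ‖Fc A ξ‖/(2*p) ≤ ((A.filter (fun x => Dot x ξ = t)).card : ℝ) := by
  classical
  set a : ℝ := (A.card : ℝ) with ha_def
  set M : ℝ := ‖Fc A ξ‖ with hM_def
  have hp0 : (0:ℝ) < p := by exact_mod_cast hpf.out.pos
  set c : ZMod p → ℝ := fun t => ((A.filter (fun x => Dot x ξ = t)).card : ℝ) with hc_def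
  have h1 : ∑ t : ZMod p, c t = a := by
    rw [ha_def, hc_def]
    rw [Finset.card_eq_sum_card_fiberwise (f := fun x => Dot x ξ) (t := Finset.univ)
      (fun x _ => Finset.mem_univ _)]
    push_cast
    rfl
  have h2 : Fc A ξ = ∑ t : ZMod p, (c t : ℂ) * ψ p t := by
    rw [Fc, ← Finset.sum_fiberwise_of_maps_to (g := fun x => Dot x ξ) (t := Finset.univ)
      (fun x _ => Finset.mem_univ (Dot x ξ)) (fun x => ψ p (Dot x ξ))]
    refine Finset.sum_congr rfl fun t _ => ?_
    have heq : ∑ x ∈ A.filter (fun x => Dot x ξ = t), ψ p (Dot x ξ)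
        = ∑ x ∈ A.filter (fun x => Dot x ξ = t), ψ p t :=
      Finset.sum_congr rfl fun x hx => by rw [(Finset.mem_filter.mp hx).2]
    rw [heq, Finset.sum_const, nsmul_eq_mul]
    norm_cast
  have hψsum : ∑ t : ZMod p, ψ p t = 0 := by
    refine sum_addChar_eq_zero (ψ p) (x := 1) ?_
    rw [Ne, ψ_eq_one_iff]
    exact one_ne_zero
  have h4 : Fc A ξ = ∑ t : ZMod p, ((c t - a/p : ℝ) : ℂ) * ψ p t := by
    rw [h2]
    have : ∑ t : ZMod p, ((c t - a/p : ℝ) : ℂ) * ψ p t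
        = ∑ t : ZMod p, ((c t : ℂ) * ψ p t - ((a/p : ℝ) : ℂ) * ψ p t) := by
      refine Finset.sum_congr rfl fun t _ => ?_
      push_cast
      ring
    rw [this, Finset.sum_sub_distrib, ← Finset.mul_sum, hψsum, mul_zero, sub_zero]
  have h5 : M ≤ ∑ t : ZMod p, |c t - a/p| := by
    rw [hM_def, h4]
    refine (norm_sum_le _ _).trans (le_of_eq (Finset.sum_congr rfl fun t _ => ?_))
    rw [norm_mul, norm_ψ, mul_one, Complex.norm_real, Real.norm_eq_abs]
  have h6 : ∑ t : ZMod p, (c t - a/p) = 0 := by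
    rw [Finset.sum_sub_distrib, h1, Finset.sum_const]
    simp only [Finset.card_univ, ZMod.card, nsmul_eq_mul]
    field_simp
    ring
  have h7 : M/2 ≤ ∑ t : ZMod p, max (c t - a/p) 0 := by
    have : ∀ t : ZMod p, max (c t - a/p) 0 = ((c t - a/p) + |c t - a/p|)/2 := by
      intro t
      rcases le_total (c t - a/p) 0 with h | h
      · rw [max_eq_right h, abs_of_nonpos h]; ring
      · rw [max_eq_left h, abs_of_nonneg h]; ring
    rw [Finset.sum_congr rfl fun t _ => this t]
    rw [← Finset.sum_div, Finset.sum_add_distrib, h6, zero_add]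
    linarith [h5]
  have h8 : ∃ t : ZMod p, M/(2*p) ≤ max (c t - a/p) 0 := by
    by_contra hcon
    push_neg at hcon
    have : ∑ t : ZMod p, max (c t - a/p) 0 < ∑ _t : ZMod p, M/(2*p) :=
      Finset.sum_lt_sum_of_nonempty ⟨0, Finset.mem_univ 0⟩ (fun t _ => hcon t)
    rw [Finset.sum_const] at this
    simp only [Finset.card_univ, ZMod.card, nsmul_eq_mul] at this
    have hps : (p:ℝ) * (M/(2*p)) = M/2 := by field_simp
    rw [hps] at this
    linarith [h7]
  obtain ⟨t, ht⟩ := h8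
  refine ⟨t, ?_⟩
  have hMp : 0 < M/(2*p) := by positivity
  have : M/(2*p) ≤ c t - a/p := by
    rcases le_total (c t - a/p) 0 with h | h
    · rw [max_eq_right h] at ht; linarith
    · rwa [max_eq_left h] at ht
  have := this
  rw [hc_def] at this
  linarith [this]

end MeshAux

namespace MeshAux

lemma pf_mono {G : Type*} [AddCommGroup G] {A B : Set G} (h : B ⊆ A)
    (hA : ProgressionFree A) : ProgressionFree B :=
  fun a ha b hb c hc habc => hA a (h ha) b (h hb) c (h hc) habc

lemma pf_image {G H : Type*} [AddCommGroup G] [AddCommGroup H] (e : G →+ H)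
    (he : Function.Injective e) {A : Set G} (hA : ProgressionFree A) :
    ProgressionFree (e '' A) := by
  rintro _ ⟨a, ha, rfl⟩ _ ⟨b, hb, rfl⟩ _ ⟨c, hc, rfl⟩ habc
  rw [← map_add, ← map_add] at habc
  exact congrArg e (hA a ha b hb c hc (he habc))

lemma pf_of_image {G H : Type*} [AddCommGroup G] [AddCommGroup H] (e : G →+ H)
    (he : Function.Injective e) {A : Set G} (hA : ProgressionFree (e '' A)) :
    ProgressionFree A := by
  intro a ha b hb c hc habc
  refine he (hA _ ⟨a, ha, rfl⟩ _ ⟨b, hb, rfl⟩ _ ⟨c, hc, rfl⟩ ?_)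
  rw [← map_add, ← map_add, habc]

lemma pf_translate {G : Type*} [AddCommGroup G] (v : G) {A : Set G}
    (hA : ProgressionFree A) : ProgressionFree ((fun x => x + v) '' A) := by
  rintro _ ⟨a, ha, rfl⟩ _ ⟨b, hb, rfl⟩ _ ⟨c, hc, rfl⟩ habc
  have h2 : a + c + (v + v) = b + b + (v + v) := by
    calc a + c + (v + v) = (a + v) + (c + v) := by abel
    _ = (b + v) + (b + v) := habc
    _ = b + b + (v + v) := by abel
  rw [hA a ha b hb c hc (add_right_cancel h2)]

lemma nat_helper : ∀ k : ℕ, ((k:ℝ) + 2)^2 ≤ 16 * 3^k := by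
  intro k
  induction k with
  | zero => norm_num
  | succ k ih =>
    have hk : (0:ℝ) ≤ (k:ℝ) := Nat.cast_nonneg k
    push_cast
    rw [pow_succ (3:ℝ) k]
    nlinarith [ih, hk, sq_nonneg ((k:ℝ))]

variable {p : ℕ} [hpf : Fact p.Prime] {m : ℕ}

lemma Dot_add_left (x y ξ : Fin m → ZMod p) : Dot (x + y) ξ = Dot x ξ + Dot y ξ := by
  simp [Dot, add_mul, Finset.sum_add_distrib]

lemma Dot_smul_left (c : ZMod p) (x ξ : Fin m → ZMod p) : Dot (c • x) ξ = c * Dot x ξ := by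
  simp only [Dot, Finset.mul_sum, Pi.smul_apply, smul_eq_mul]
  exact Finset.sum_congr rfl fun i _ => by ring

lemma Dot_single (i : Fin m) (w : ZMod p) (ξ : Fin m → ZMod p) :
    Dot (Pi.single i w) ξ = w * ξ i := by
  rw [Dot, Finset.sum_eq_single i]
  · simp
  · intro j _ hj; simp [Pi.single_apply, hj]
  · simp

end MeshAux

namespace MeshAux

set_option maxHeartbeats 1600000 in
theorem meshulam (p : ℕ) [hpf : Fact p.Prime] (hodd : Odd p) :
    ∀ (m : ℕ) (V : Type) [AddCommGroup V] [Module (ZMod p) V] [Fintype V],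
      Module.finrank (ZMod p) V = m → ∀ A : Finset V, ProgressionFree (A : Set V) →
        (A.card : ℝ) * ((m : ℝ) + 2) ≤ 8 * (p:ℝ)^m := by
  intro m
  induction m with
  | zero =>
    intro V _ _ _ hrk A _
    have hcard : Fintype.card V = 1 := by
      have h := Module.card_eq_pow_finrank (K := ZMod p) (V := V)
      rwa [hrk, ZMod.card, pow_zero] at h
    have hA1 : A.card ≤ 1 := by
      have h := Finset.card_le_univ A
      rwa [hcard] at h
    have : (A.card : ℝ) ≤ 1 := by exact_mod_cast hA1
    rw [pow_zero]
    push_cast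
    nlinarith [this]
  | succ m ih =>
    intro V _ _ _ hrk A hA
    classical
    by_contra hcon
    push_neg at hcon
    -- basic numbers
    have hp2 : 2 ≤ p := hpf.out.two_le
    have hp3 : 3 ≤ p := by
      rcases hodd with ⟨k, hk⟩
      omega
    have hp3' : (3:ℝ) ≤ (p:ℝ) := by exact_mod_cast hp3
    have hp0 : (0:ℝ) < p := by exact_mod_cast hpf.out.pos
    have hN : (0:ℝ) < (p:ℝ)^(m+1) := by positivity
    have h3N : (3:ℝ)^(m+1) ≤ (p:ℝ)^(m+1) :=
      pow_le_pow_left₀ (by norm_num) hp3' (m+1)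
    have hhelper : ((m:ℝ) + 3)^2 ≤ 16 * (p:ℝ)^(m+1) := by
      have := nat_helper (m+1)
      push_cast at this
      nlinarith [this, h3N]
    set N : ℝ := (p:ℝ)^(m+1) with hN_def
    set a : ℝ := (A.card : ℝ) with ha_def
    have hcon' : 8 * N < a * ((m:ℝ) + 3) := by
      rw [hN_def, ha_def]
      push_cast
      push_cast at hcon
      nlinarith [hcon]
    have ha0 : 0 < a := by
      by_contra h
      push_neg at h
      nlinarith [hN, hcon']
    have habig : 2 * N < a^2 := by
      nlinarith [hcon', hhelper, hN, ha0]
    -- transfer to coordinates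
    have hfd : Module.Finite (ZMod p) V := inferInstance
    let bV := Module.finBasisOfFinrankEq (ZMod p) V hrk
    let e : V ≃ₗ[ZMod p] (Fin (m+1) → ZMod p) := bV.equivFun
    let A' : Finset (Fin (m+1) → ZMod p) := A.image e
    have hcardA' : A'.card = A.card := Finset.card_image_of_injective A e.injective
    have hA' : ProgressionFree (A' : Set (Fin (m+1) → ZMod p)) := by
      have hco : (A' : Set (Fin (m+1) → ZMod p))
          = ⇑(e.toLinearMap.toAddMonoidHom) '' (A : Set V) := Finset.coe_image
      rw [hco]
      exact pf_image _ e.injective hA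
    have ha' : a = (A'.card : ℝ) := by rw [hcardA', ha_def]
    -- large Fourier coefficient
    have hApos : 0 < A'.card := by
      rw [hcardA']
      exact Nat.cast_pos (α := ℝ) |>.mp (ha_def ▸ ha0)
    obtain ⟨ξ, hξ0, hξ⟩ := exists_large_coeff hodd A' hA' hApos
    rw [← ha', ← hN_def] at hξ
    have hMpos : 0 < ‖Fc A' ξ‖ := by
      have h1 : (1:ℝ) < a^2/N - 1 := by
        rw [lt_sub_iff_add_lt, lt_div_iff₀ hN]
        nlinarith [habig]
      linarith [hξ]
    -- dense slice
    obtain ⟨t, hslice⟩ := exists_dense_slice A' ξ hMpos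
    rw [← ha'] at hslice
    set B : Finset (Fin (m+1) → ZMod p) := A'.filter (fun x => Dot x ξ = t) with hB_def
    have hBcard : a/p + (a^2/N - 1)/(2*p) ≤ (B.card : ℝ) := by
      have h2p : (0:ℝ) < 2*p := by nlinarith [hp0]
      have hmono : (a^2/N - 1)/(2*p) ≤ ‖Fc A' ξ‖/(2*p) := by
        apply div_le_div_of_nonneg_right hξ h2p.le
      linarith [hslice, hmono]
    have hB0 : (0:ℝ) < B.card := by
      have hap : 0 < a/p := div_pos ha0 hp0
      have h2 : 0 ≤ (a^2/N - 1)/(2*p) := by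
        apply div_nonneg _ (by nlinarith [hp0])
        have : (1:ℝ) ≤ a^2/N := by rw [le_div_iff₀ hN]; nlinarith [habig]
        linarith
      linarith [hBcard]
    have hBne : B.Nonempty := Finset.card_pos.mp (by exact_mod_cast hB0)
    obtain ⟨x₀, hx₀⟩ := hBne
    -- the hyperplane as kernel
    let φ : (Fin (m+1) → ZMod p) →ₗ[ZMod p] ZMod p :=
      { toFun := fun x => Dot x ξ
        map_add' := fun x y => Dot_add_left x y ξ
        map_smul' := fun c x => Dot_smul_left c x ξ }
    have hφsurj : Function.Surjective φ := by
      obtain ⟨i, hi⟩ : ∃ i, ξ i ≠ 0 := by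
        by_contra h; push_neg at h; exact hξ0 (funext h)
      intro z
      refine ⟨Pi.single i (z * (ξ i)⁻¹), ?_⟩
      show Dot (Pi.single i (z * (ξ i)⁻¹)) ξ = z
      rw [Dot_single, mul_assoc, inv_mul_cancel₀ hi, mul_one]
    have hrkker : Module.finrank (ZMod p) (LinearMap.ker φ) = m := by
      have h1 := LinearMap.finrank_range_add_finrank_ker φ
      rw [LinearMap.range_eq_top.mpr hφsurj, finrank_top, Module.finrank_self,
        Module.finrank_pi] at h1
      simp at h1
      omega
    -- translate B into the kernel
    let B' : Finset (Fin (m+1) → ZMod p) := B.image (fun y => y + (-x₀))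
    have hB'card : B'.card = B.card :=
      Finset.card_image_of_injective B (add_left_injective (-x₀))
    have hB'pf : ProgressionFree (B' : Set (Fin (m+1) → ZMod p)) := by
      have hBpf : ProgressionFree (B : Set (Fin (m+1) → ZMod p)) :=
        pf_mono (by rw [hB_def]; exact Finset.coe_subset.mpr (Finset.filter_subset _ _)) hA'
      have hco : (B' : Set (Fin (m+1) → ZMod p)) = (fun y => y + (-x₀)) '' (B : Set _) :=
        Finset.coe_image
      rw [hco]
      exact pf_translate _ hBpf
    have hB'sub : ∀ y ∈ B', y ∈ LinearMap.ker φ := by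
      intro y hy
      rw [Finset.mem_image] at hy
      obtain ⟨z, hz, rfl⟩ := hy
      rw [LinearMap.mem_ker]
      have hz' : Dot z ξ = t := (Finset.mem_filter.mp hz).2
      have hx₀' : Dot x₀ ξ = t := (Finset.mem_filter.mp hx₀).2
      show Dot (z + (-x₀)) ξ = 0
      rw [Dot_add_left]
      have : Dot (-x₀) ξ = -Dot x₀ ξ := by
        have := Dot_smul_left (-1 : ZMod p) x₀ ξ
        simpa using this
      rw [this, hz', hx₀']
      ring
    let B'' : Finset (LinearMap.ker φ) := B'.subtype (· ∈ LinearMap.ker φ)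
    have hB''card : B''.card = B'.card := by
      rw [Finset.card_subtype, Finset.filter_true_of_mem hB'sub]
    have hB''pf : ProgressionFree ((B'' : Finset (LinearMap.ker φ)) : Set (LinearMap.ker φ)) := by
      refine pf_of_image ((LinearMap.ker φ).subtype.toAddMonoidHom) Subtype.coe_injective ?_
      refine pf_mono ?_ hB'pf
      rintro _ ⟨y, hy, rfl⟩
      have := Finset.mem_subtype.mp hy
      exact this
    have hIH := ih (LinearMap.ker φ) hrkker B'' hB''pf
    -- final contradiction
    have hIH' : (B.card : ℝ) * ((m:ℝ) + 2) ≤ 8 * (p:ℝ)^m := by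
      rw [← hB'card, ← hB''card] at *
      exact_mod_cast hIH
    have hkey : (2 * N * a + a^2 - N) * ((m:ℝ) + 2) ≤ 16 * N^2 := by
      have h2pN : (0:ℝ) < 2*(p:ℝ)*N := by nlinarith [hp0, hN]
      have hB1 : 2 * N * a + a^2 - N ≤ 2 * (p:ℝ) * N * (B.card:ℝ) := by
        have hmul := mul_le_mul_of_nonneg_right hBcard h2pN.le
        have hexp : (a/p + (a^2/N - 1)/(2*p)) * (2 * (p:ℝ) * N) = 2 * N * a + a^2 - N := by
          field_simp
          ring
        rw [hexp] at hmul
        linarith [hmul]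
      have hB2 : (B.card:ℝ) * ((m:ℝ)+2) ≤ 8 * N / p := by
        rw [hN_def, pow_succ, mul_div_assoc, mul_div_assoc, div_self (ne_of_gt hp0), mul_one]
        exact hIH'
      have hm2 : (0:ℝ) ≤ (m:ℝ) + 2 := by positivity
      calc (2 * N * a + a^2 - N) * ((m:ℝ) + 2)
          ≤ (2 * (p:ℝ) * N * (B.card:ℝ)) * ((m:ℝ) + 2) :=
            mul_le_mul_of_nonneg_right hB1 hm2
        _ = (2 * (p:ℝ) * N) * ((B.card:ℝ) * ((m:ℝ) + 2)) := by ring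
        _ ≤ (2 * (p:ℝ) * N) * (8 * N / p) := mul_le_mul_of_nonneg_left hB2 h2pN.le
        _ = 16 * N^2 := by field_simp; ring
    -- final contradiction
    set u : ℝ := a*((m:ℝ)+3) - 8*N with hu_def
    have hu : 0 < u := by rw [hu_def]; linarith [hcon']
    have hm0 : (0:ℝ) ≤ (m:ℝ) := Nat.cast_nonneg m
    have hid : ((m:ℝ)+3)^2 * ((2*N*a + a^2 - N)*((m:ℝ)+2) - 16*N^2)
        = ((m:ℝ)+2)*(2*N*((m:ℝ)+3)*u + u^2 + 16*N*u)
          + N*((m:ℝ)+2)*(16*N - ((m:ℝ)+3)^2) + 16*N^2*(2*(m:ℝ)+3) := by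
      rw [hu_def]; ring
    have t1 : 0 < 2*N*((m:ℝ)+3)*u + u^2 + 16*N*u := by
      have a1 : 0 < 2*N*((m:ℝ)+3)*u :=
        mul_pos (mul_pos (by linarith : (0:ℝ) < 2*N) (by linarith : (0:ℝ) < (m:ℝ)+3)) hu
      have a2 : 0 < u^2 := by positivity
      have a3 : 0 < 16*N*u := mul_pos (by linarith : (0:ℝ) < 16*N) hu
      linarith
    have t2 : 0 ≤ N*((m:ℝ)+2)*(16*N - ((m:ℝ)+3)^2) :=
      mul_nonneg (mul_nonneg hN.le (by linarith)) (by linarith [hhelper])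
    have t3 : 0 < 16*N^2*(2*(m:ℝ)+3) := by
      have : (0:ℝ) < N^2 := by positivity
      nlinarith [this, hm0]
    have hpos : 0 < ((m:ℝ)+2)*(2*N*((m:ℝ)+3)*u + u^2 + 16*N*u)
        + N*((m:ℝ)+2)*(16*N - ((m:ℝ)+3)^2) + 16*N^2*(2*(m:ℝ)+3) := by
      have := mul_pos (show (0:ℝ) < (m:ℝ)+2 by linarith) t1
      linarith
    have hneg : ((m:ℝ)+3)^2 * ((2*N*a + a^2 - N)*((m:ℝ)+2) - 16*N^2) ≤ 0 :=
      mul_nonpos_of_nonneg_of_nonpos (by positivity) (by linarith [hkey])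
    rw [hid] at hneg
    linarith [hneg, hpos]

end MeshAux

theorem stmt_2 :
    ∃ C : ℝ, 0 < C ∧
      ∀ (p n r : ℕ), p.Prime → Odd p → 0 < n → 1 ≤ r →
        ∀ (F : Type) [Field F] [Fintype F], Fintype.card F = p ^ n →
          ∀ A : Set (Fin r → F), ProgressionFree A →
            (((p : ℝ) ^ n) ^ r)⁻¹ * A.ncard ≤ C / r := by
  classical
  refine ⟨8, by norm_num, ?_⟩
  intro p n r hp hodd hn hr F _ _ hcardF A hPF
  haveI hpf : Fact p.Prime := ⟨hp⟩
  -- characteristic of F is p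
  have hq : CharP F (ringChar F) := ringChar.charP F
  have hq_prime : (ringChar F).Prime := CharP.char_is_prime F (ringChar F)
  obtain ⟨d, _, hcard_eq⟩ := FiniteField.card F (ringChar F)
  have hpq : p = ringChar F := by
    have h1 : p ∣ (ringChar F) ^ (d : ℕ) := by
      rw [← hcard_eq, hcardF]
      exact dvd_pow_self p hn.ne'
    exact (Nat.prime_dvd_prime_iff_eq hp hq_prime).mp (hp.dvd_of_dvd_pow h1)
  haveI hchar : CharP F p := by rw [hpq]; exact hq
  letI : Algebra (ZMod p) F := ZMod.algebra F p
  -- dimensions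
  have hfrF : Module.finrank (ZMod p) F = n := by
    have h := Module.card_eq_pow_finrank (K := ZMod p) (V := F)
    rw [ZMod.card, hcardF] at h
    exact (Nat.pow_right_injective hp.two_le h.symm)
  have hfrV : Module.finrank (ZMod p) (Fin r → F) = r * n := by
    rw [Module.finrank_pi_fintype (ZMod p)]
    simp [hfrF, Finset.sum_const, Finset.card_univ]
  -- finite set
  have hfin : A.Finite := A.toFinite
  set Af : Finset (Fin r → F) := hfin.toFinset with hAf_def
  have hAfc : ProgressionFree (Af : Set (Fin r → F)) := by
    rw [hAf_def, Set.Finite.coe_toFinset]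
    exact hPF
  have hmesh := MeshAux.meshulam p hodd (r*n) (Fin r → F) hfrV Af hAfc
  have hncard : (A.ncard : ℝ) = (Af.card : ℝ) := by
    rw [Set.ncard_eq_toFinset_card A hfin]
  -- arithmetic
  have hp0 : (0:ℝ) < p := by exact_mod_cast hp.pos
  have hP : (0:ℝ) < ((p:ℝ)^n)^r := by positivity
  have hr0 : (0:ℝ) < r := by exact_mod_cast hr
  have hpow : ((p:ℝ)^n)^r = (p:ℝ)^(r*n) := by
    rw [← pow_mul, mul_comm]
  have hrle : (r:ℝ) ≤ ((r*n : ℕ) : ℝ) + 2 := by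
    have h : r ≤ r*n := Nat.le_mul_of_pos_right r hn
    have h' : (r:ℝ) ≤ ((r*n:ℕ):ℝ) := by exact_mod_cast h
    linarith
  have key : (A.ncard : ℝ) * r ≤ 8 * ((p:ℝ)^n)^r := by
    rw [hncard, hpow]
    calc (Af.card : ℝ) * r ≤ (Af.card : ℝ) * ((r*n : ℕ) + 2) :=
          mul_le_mul_of_nonneg_left hrle (Nat.cast_nonneg _)
    _ ≤ 8 * (p:ℝ)^(r*n) := by
        have := hmesh
        push_cast at this ⊢
        linarith [this]
  have heq : (((p:ℝ)^n)^r)⁻¹ * (A.ncard:ℝ) = (A.ncard:ℝ) / ((p:ℝ)^n)^r := by ring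
  rw [heq, div_le_div_iff₀ hP hr0]
  linarith [key]
end

section
/- Let $q$ be a prime power and $r \ge 1$ an integer. If $f$ is a real-valued function on the vector space $\mathbb{F}_q^r$, then $\|\tilde{f}\|_2^2 = \sum_{V} \|\tilde{f}|V\|_2^2$, where the sum is over all linear subspaces $V < \mathbb{F}_q^r$ of codimension $1$. -/
open scoped BigOperators

/-- `𝔼 f`: the average of a real-valued function over a (finite) type. -/
noncomputable def expect {G : Type*} (f : G → ℝ) : ℝ :=
  (∑ᶠ g, f g) / Nat.card G

/-- The balanced part `f̃ = f - 𝔼 f` of `f`. -/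
noncomputable def balanced {G : Type*} (f : G → ℝ) : G → ℝ :=
  fun g => f g - expect f

/-- `Λ_E[f]` for the linear homogeneous equation `E : c 0 • x 0 + ⋯ + c (k-1) • x (k-1) = 0`:
the average of `f (x 0) ⋯ f (x (k-1))` over the solution set of `E`. -/
noncomputable def lam {G : Type*} [AddCommGroup G] {k : ℕ} (c : Fin k → ℤ) (f : G → ℝ) : ℝ :=
  (∑ᶠ x ∈ {x : Fin k → G | ∑ i, c i • x i = 0}, ∏ i, f (x i)) /
    Nat.card {x : Fin k → G // ∑ i, c i • x i = 0}

/-- `f|V`: the coset-average of `f`, as a function on the quotient `M ⧸ V`. -/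
noncomputable def quotFn {F M : Type*} [Field F] [AddCommGroup M] [Module F M]
    (V : Submodule F M) (f : M → ℝ) : (M ⧸ V) → ℝ :=
  fun x => (∑ᶠ g ∈ {g : M | (Submodule.Quotient.mk g : M ⧸ V) = x}, f g) / Nat.card V

/-- `‖f‖₂² = 𝔼(f²)`. -/
noncomputable def norm2sq {G : Type*} (f : G → ℝ) : ℝ :=
  expect (fun g => f g ^ 2)

set_option linter.unusedSectionVars false
set_option maxHeartbeats 1000000

open Module
open scoped Classical

section counting
variable {F : Type} [Field F] [Fintype F] {M : Type} [AddCommGroup M] [Module F M] [Fintype M]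

instance : Finite (Module.Dual F M) :=
  Finite.of_injective (fun φ => (φ : M → F)) DFunLike.coe_injective

lemma ker_hyperplane (φ : Module.Dual F M) (h : φ ≠ 0) :
    finrank F (M ⧸ LinearMap.ker φ) = 1 := by
  have hs : Function.Surjective φ := by
    obtain ⟨m, hm⟩ : ∃ m, φ m ≠ 0 := by
      by_contra hc; push_neg at hc
      exact h (LinearMap.ext fun m => hc m)
    intro a
    exact ⟨(a / φ m) • m, by simp [div_mul_cancel₀, hm]⟩
  rw [(φ.quotKerEquivOfSurjective hs).finrank_eq, finrank_self]

lemma exists_ker_eq (V : Submodule F M) (hV : finrank F (M ⧸ V) = 1) :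
    ∃ φ : Module.Dual F M, φ ≠ 0 ∧ LinearMap.ker φ = V := by
  have : finrank F (M ⧸ V) = finrank F F := by rw [hV, finrank_self]
  obtain ⟨e⟩ := FiniteDimensional.nonempty_linearEquiv_of_finrank_eq this
  set φ : Module.Dual F M := e.toLinearMap ∘ₗ V.mkQ with hφ
  have hsurj : Function.Surjective φ := e.surjective.comp (Submodule.mkQ_surjective V)
  refine ⟨φ, ?_, ?_⟩
  · obtain ⟨m, hm⟩ := hsurj 1
    intro h0
    rw [h0] at hm
    simpa using hm
  · rw [hφ, LinearMap.ker_comp, LinearEquiv.ker, Submodule.comap_bot, Submodule.ker_mkQ]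

lemma sup_span_eq_top (V : Submodule F M) (hV : finrank F (M ⧸ V) = 1) {x : M} (hx : x ∉ V) :
    V ⊔ Submodule.span F {x} = ⊤ := by
  have hmk : (Submodule.Quotient.mk x : M ⧸ V) ≠ 0 := by
    simpa [Submodule.Quotient.mk_eq_zero] using hx
  have hspan : Submodule.span F {(Submodule.Quotient.mk x : M ⧸ V)} = ⊤ := by
    apply Submodule.eq_top_of_finrank_eq
    rw [finrank_span_singleton hmk, hV]
  have hmap : Submodule.map V.mkQ (Submodule.span F {x}) = ⊤ := by
    rw [Submodule.map_span, Set.image_singleton]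
    exact hspan
  rw [← Submodule.comap_map_mkQ, hmap, Submodule.comap_top]

lemma fiber_card (V : Submodule F M) (hV : finrank F (M ⧸ V) = 1) :
    Nat.card {φ : Module.Dual F M // φ ≠ 0 ∧ LinearMap.ker φ = V} = Fintype.card F - 1 := by
  obtain ⟨φ₀, hφ₀, hker₀⟩ := exists_ker_eq V hV
  obtain ⟨x, hx0⟩ : ∃ x, φ₀ x ≠ 0 := by
    by_contra hc; push_neg at hc
    exact hφ₀ (LinearMap.ext fun m => hc m)
  have hxV : x ∉ V := by rw [← hker₀]; exact fun h => hx0 h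
  have hsup := sup_span_eq_top V hV hxV
  have key : ∀ φ : Module.Dual F M, LinearMap.ker φ = V → φ = (φ x / φ₀ x) • φ₀ := by
    intro φ hker
    have : LinearMap.ker (φ - (φ x / φ₀ x) • φ₀) = ⊤ := by
      rw [eq_top_iff, ← hsup, sup_le_iff]
      constructor
      · intro v hv
        have h1 : φ v = 0 := by rw [← hker] at hv; exact hv
        have h2 : φ₀ v = 0 := by rw [← hker₀] at hv; exact hv
        simp [LinearMap.mem_ker, h1, h2]
      · rw [Submodule.span_le, Set.singleton_subset_iff]
        simp [LinearMap.mem_ker, div_mul_cancel₀ _ hx0]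
    exact sub_eq_zero.mp (LinearMap.ker_eq_top.mp this)
  have e : Fˣ ≃ {φ : Module.Dual F M // φ ≠ 0 ∧ LinearMap.ker φ = V} :=
    { toFun := fun c => ⟨(c : F) • φ₀, smul_ne_zero c.ne_zero hφ₀,
        by rw [LinearMap.ker_smul _ _ c.ne_zero, hker₀]⟩
      invFun := fun φ => Units.mk0 (φ.1 x / φ₀ x)
        (div_ne_zero (fun h => φ.2.1
          (by simpa [h, zero_div, zero_smul] using key φ.1 φ.2.2)) hx0)
      left_inv := fun c => by
        ext
        simp [mul_div_assoc, div_self hx0]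
      right_inv := fun φ => by
        ext1
        show ((φ.1 x / φ₀ x) : F) • φ₀ = φ.1
        exact (key φ.1 φ.2.2).symm }
  rw [Nat.card_congr e.symm, Nat.card_eq_fintype_card, Fintype.card_units]

lemma card_eval_zero :
    Nat.card {φ : Module.Dual F M // φ (0 : M) = 0} = Fintype.card F ^ finrank F M := by
  letI : Fintype (Module.Dual F M) := Fintype.ofFinite _
  rw [Nat.card_congr (Equiv.subtypeUnivEquiv (fun φ => map_zero φ)),
    Nat.card_eq_fintype_card, card_eq_pow_finrank (K := F), Subspace.dual_finrank_eq]

lemma card_eval_ne_zero (d : M) (hd : d ≠ 0) :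
    Nat.card {φ : Module.Dual F M // φ d = 0} = Fintype.card F ^ (finrank F M - 1) := by
  set ev : Module.Dual F M →ₗ[F] F := Module.Dual.eval F M d with hev
  have hsurj : Function.Surjective ev := by
    obtain ⟨φ, hφ⟩ : ∃ φ : Module.Dual F M, φ d ≠ 0 := by
      by_contra hc; push_neg at hc
      exact hd ((Module.forall_dual_apply_eq_zero_iff F d).mp hc)
    intro a
    refine ⟨(a / φ d) • φ, ?_⟩
    simp [hev, div_mul_cancel₀, hφ]
  have hrk : 1 + finrank F (LinearMap.ker ev) = finrank F M := by
    have h1 := LinearMap.finrank_range_add_finrank_ker ev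
    rw [LinearMap.range_eq_top.mpr hsurj, finrank_top, finrank_self] at h1
    rw [h1, Subspace.dual_finrank_eq]
  have he : {φ : Module.Dual F M // φ d = 0} ≃ LinearMap.ker ev :=
    Equiv.subtypeEquivRight (fun φ => by simp [hev, LinearMap.mem_ker])
  letI : Fintype (LinearMap.ker ev) := Fintype.ofFinite _
  rw [Nat.card_congr he, Nat.card_eq_fintype_card, card_eq_pow_finrank (K := F)]
  congr 1
  omega

lemma card_nonzero_eval (d : M) :
    Nat.card {φ : Module.Dual F M // φ ≠ 0 ∧ φ d = 0} + 1 =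
      Nat.card {φ : Module.Dual F M // φ d = 0} := by
  letI : Fintype (Module.Dual F M) := Fintype.ofFinite _
  rw [Nat.card_eq_fintype_card, Nat.card_eq_fintype_card, Fintype.card_subtype,
    Fintype.card_subtype]
  have h1 : (Finset.univ.filter (fun φ : Module.Dual F M => φ ≠ 0 ∧ φ d = 0)) =
      (Finset.univ.filter (fun φ : Module.Dual F M => φ d = 0)).erase 0 := by
    ext φ
    simp [and_comm, eq_comm]
  rw [h1]
  exact Finset.card_erase_add_one (by simp)

lemma master_count (d : M) :
    (Fintype.card F - 1) *
        Nat.card {V : Submodule F M // finrank F (M ⧸ V) = 1 ∧ d ∈ V} =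
      Nat.card {φ : Module.Dual F M // φ ≠ 0 ∧ φ d = 0} := by
  letI : Fintype (Module.Dual F M) := Fintype.ofFinite _
  letI : Fintype (Submodule F M) := Fintype.ofFinite _
  set s := Finset.univ.filter (fun φ : Module.Dual F M => φ ≠ 0 ∧ φ d = 0) with hs
  set t := Finset.univ.filter
    (fun V : Submodule F M => finrank F (M ⧸ V) = 1 ∧ d ∈ V) with ht
  have hmaps : ∀ φ ∈ s, LinearMap.ker φ ∈ t := by
    intro φ hφ
    rw [hs, Finset.mem_filter] at hφ
    rw [ht, Finset.mem_filter]
    exact ⟨Finset.mem_univ _, ker_hyperplane φ hφ.2.1, hφ.2.2⟩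
  have hcard := Finset.card_eq_sum_card_fiberwise hmaps
  have hfib : ∀ V ∈ t, (s.filter (fun φ => LinearMap.ker φ = V)).card =
      Fintype.card F - 1 := by
    intro V hV
    rw [ht, Finset.mem_filter] at hV
    rw [← fiber_card V hV.2.1, Nat.card_eq_fintype_card, Fintype.card_subtype]
    congr 1
    ext φ
    simp only [hs, Finset.mem_filter, Finset.mem_univ, true_and, and_assoc]
    constructor
    · rintro ⟨h1, _, h3⟩; exact ⟨h1, h3⟩
    · rintro ⟨h1, h3⟩
      exact ⟨h1, by rw [← h3] at hV; exact hV.2.2, h3⟩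
  rw [Nat.card_eq_fintype_card, Nat.card_eq_fintype_card, Fintype.card_subtype,
    Fintype.card_subtype]
  show (Fintype.card F - 1) * t.card = s.card
  rw [hcard, Finset.sum_congr rfl hfib, Finset.sum_const, smul_eq_mul, mul_comm]

lemma count_final (d : M) :
    (Fintype.card F - 1) *
        Nat.card {V : Submodule F M // finrank F (M ⧸ V) = 1 ∧ d ∈ V} + 1 =
      Fintype.card F ^ (if d = 0 then finrank F M else finrank F M - 1) := by
  rw [master_count, card_nonzero_eval]
  by_cases hd : d = 0
  · rw [if_pos hd, hd, card_eval_zero]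
  · rw [if_neg hd, card_eval_ne_zero d hd]

lemma quot_norm2sq (V : Submodule F M) (h : M → ℝ) :
    norm2sq (quotFn V h) =
      (∑ g : M, ∑ g' : M, if g - g' ∈ V then h g * h g' else 0) /
        ((Nat.card V : ℝ) ^ 2 * (Nat.card (M ⧸ V) : ℝ)) := by
  letI : Fintype (M ⧸ V) := Fintype.ofFinite _
  have h2 : ∀ g : M, (∑ g' ∈ Finset.univ.filter
        (fun g' : M => (Submodule.Quotient.mk g' : M ⧸ V) =
          (Submodule.Quotient.mk g : M ⧸ V)), h g') =
      ∑ g' : M, if g - g' ∈ V then h g' else 0 := by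
    intro g
    rw [Finset.sum_filter]
    apply Finset.sum_congr rfl
    intro g' _
    apply if_congr _ rfl rfl
    rw [Submodule.Quotient.eq]
    constructor
    · intro hm; simpa [neg_sub] using V.neg_mem hm
    · intro hm; simpa [neg_sub] using V.neg_mem hm
  have key : (∑ x : M ⧸ V, (∑ g ∈ Finset.univ.filter
        (fun g : M => (Submodule.Quotient.mk g : M ⧸ V) = x), h g) ^ 2) =
      ∑ g : M, ∑ g' : M, if g - g' ∈ V then h g * h g' else 0 := by
    calc (∑ x : M ⧸ V, (∑ g ∈ Finset.univ.filter
          (fun g : M => (Submodule.Quotient.mk g : M ⧸ V) = x), h g) ^ 2)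
        = ∑ x : M ⧸ V, ∑ g ∈ Finset.univ.filter
            (fun g : M => (Submodule.Quotient.mk g : M ⧸ V) = x),
            (h g * ∑ g' : M, if g - g' ∈ V then h g' else 0) := by
          apply Finset.sum_congr rfl
          intro x _
          rw [sq, Finset.sum_mul]
          apply Finset.sum_congr rfl
          intro g hg
          rw [Finset.mem_filter] at hg
          rw [← hg.2, h2 g]
      _ = ∑ g : M, (h g * ∑ g' : M, if g - g' ∈ V then h g' else 0) :=
          Finset.sum_fiberwise _ _ _
      _ = ∑ g : M, ∑ g' : M, if g - g' ∈ V then h g * h g' else 0 := by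
          apply Finset.sum_congr rfl
          intro g _
          rw [Finset.mul_sum]
          apply Finset.sum_congr rfl
          intro g' _
          rw [mul_ite, mul_zero]
  have hquot : ∀ x : M ⧸ V, quotFn V h x ^ 2 =
      (∑ g ∈ Finset.univ.filter
        (fun g : M => (Submodule.Quotient.mk g : M ⧸ V) = x), h g) ^ 2 /
        (Nat.card V : ℝ) ^ 2 := by
    intro x
    have hset : {g : M | (Submodule.Quotient.mk g : M ⧸ V) = x} =
        ↑(Finset.univ.filter (fun g : M => (Submodule.Quotient.mk g : M ⧸ V) = x)) := by
      ext g; simp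
    simp only [quotFn]
    rw [hset, finsum_mem_coe_finset, div_pow]
  rw [norm2sq, expect, finsum_eq_sum_of_fintype]
  rw [Finset.sum_congr rfl (fun x _ => hquot x), ← Finset.sum_div, key, div_div]

end counting

lemma sum_balanced_eq_zero {G : Type} [Fintype G] [Nonempty G] (f : G → ℝ) :
    ∑ g : G, balanced f g = 0 := by
  have hc : (Fintype.card G : ℝ) ≠ 0 := by
    exact_mod_cast Fintype.card_ne_zero
  simp only [balanced, expect, finsum_eq_sum_of_fintype, Nat.card_eq_fintype_card]
  rw [Finset.sum_sub_distrib, Finset.sum_const, Finset.card_univ, nsmul_eq_mul]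
  field_simp
  ring

lemma main_aux {F : Type} [Field F] [Fintype F] {M : Type} [AddCommGroup M] [Module F M]
    [Fintype M] (q r : ℕ) (hr : 1 ≤ r) (hqF : Fintype.card F = q) (hq2 : 2 ≤ q)
    (hrk : Module.finrank F M = r) (h : M → ℝ) (hsum : ∑ g : M, h g = 0) :
    norm2sq h =
      ∑ᶠ V ∈ {V : Submodule F M | Module.finrank F (M ⧸ V) = 1},
        norm2sq (quotFn V h) := by
  have hqR : (1:ℝ) < (q:ℝ) := by exact_mod_cast hq2
  have hq0 : (q:ℝ) ≠ 0 := by positivity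
  have hq1 : (q:ℝ) - 1 ≠ 0 := by nlinarith
  have hcardM : Fintype.card M = q ^ r := by
    rw [card_eq_pow_finrank (K := F), hqF, hrk]
  -- counting, real version
  have hcount : ∀ d : M,
      ((q:ℝ) - 1) * (Nat.card {V : Submodule F M // Module.finrank F (M ⧸ V) = 1 ∧ d ∈ V} : ℝ) =
        (if d = 0 then (q:ℝ) ^ r else (q:ℝ) ^ (r - 1)) - 1 := by
    intro d
    have hnat := count_final (F := F) (M := M) d
    rw [hqF, hrk] at hnat
    by_cases hd : d = 0
    · rw [if_pos hd] at hnat ⊢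
      have hcast : (((q - 1) *
          Nat.card {V : Submodule F M // Module.finrank F (M ⧸ V) = 1 ∧ d ∈ V} + 1 : ℕ) : ℝ)
          = ((q ^ r : ℕ) : ℝ) := by exact_mod_cast congrArg (Nat.cast : ℕ → ℝ) hnat
      push_cast [Nat.cast_sub (by omega : 1 ≤ q)] at hcast
      linarith
    · rw [if_neg hd] at hnat ⊢
      have hcast : (((q - 1) *
          Nat.card {V : Submodule F M // Module.finrank F (M ⧸ V) = 1 ∧ d ∈ V} + 1 : ℕ) : ℝ)
          = ((q ^ (r - 1) : ℕ) : ℝ) := by exact_mod_cast congrArg (Nat.cast : ℕ → ℝ) hnat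
      push_cast [Nat.cast_sub (by omega : 1 ≤ q)] at hcast
      linarith
  -- Finset of hyperplanes
  letI : Fintype (Submodule F M) := Fintype.ofFinite _
  set H : Finset (Submodule F M) :=
    Finset.univ.filter (fun V => Module.finrank F (M ⧸ V) = 1) with hH
  have hSetH : {V : Submodule F M | Module.finrank F (M ⧸ V) = 1} = ↑H := by
    ext V; simp [hH]
  rw [hSetH, finsum_mem_coe_finset]
  -- indicator sum over H
  have hind : ∀ d : M, (∑ V ∈ H, if d ∈ V then (1:ℝ) else 0) =
      (Nat.card {V : Submodule F M // Module.finrank F (M ⧸ V) = 1 ∧ d ∈ V} : ℝ) := by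
    intro d
    rw [Finset.sum_boole, Nat.card_eq_fintype_card, Fintype.card_subtype]
    congr 1
    rw [hH, Finset.filter_filter]
  -- per-V denominator
  have hcV : ∀ V ∈ H, (Nat.card V : ℝ) ^ 2 * (Nat.card (M ⧸ V) : ℝ) =
      ((q:ℝ) ^ r) ^ 2 / (q:ℝ) := by
    intro V hV
    rw [hH, Finset.mem_filter] at hV
    letI : Fintype (M ⧸ V) := Fintype.ofFinite _
    letI : Fintype V := Fintype.ofFinite _
    have h1 : Nat.card (M ⧸ V) = q := by
      rw [Nat.card_eq_fintype_card, card_eq_pow_finrank (K := F), hV.2, pow_one, hqF]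
    have h2 : Module.finrank F V = r - 1 := by
      have := Submodule.finrank_quotient_add_finrank V
      rw [hV.2, hrk] at this
      omega
    have h3 : Nat.card V = q ^ (r - 1) := by
      rw [Nat.card_eq_fintype_card, card_eq_pow_finrank (K := F), h2, hqF]
    rw [h1, h3, eq_div_iff hq0]
    push_cast
    calc ((q:ℝ) ^ (r-1)) ^ 2 * (q:ℝ) * (q:ℝ)
        = (q:ℝ) ^ ((r-1)*2) * (q:ℝ) ^ 1 * (q:ℝ) ^ 1 := by rw [← pow_mul, pow_one]
      _ = (q:ℝ) ^ ((r-1)*2 + 1 + 1) := by rw [← pow_add, ← pow_add]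
      _ = (q:ℝ) ^ (r*2) := by congr 1; omega
      _ = ((q:ℝ) ^ r) ^ 2 := by rw [pow_mul]
  -- T V
  set T : Submodule F M → ℝ :=
    fun V => ∑ g : M, ∑ g' : M, if g - g' ∈ V then h g * h g' else 0 with hT
  have hqq : (q:ℝ) * (q:ℝ) ^ (r-1) = (q:ℝ) ^ r := by
    rw [← pow_succ']
    congr 1
    omega
  have hTsum : ∑ V ∈ H, T V = (q:ℝ) ^ (r - 1) * ∑ g : M, h g ^ 2 := by
    have swap : ∑ V ∈ H, T V = ∑ g : M, ∑ g' : M,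
        (h g * h g') * ∑ V ∈ H, (if g - g' ∈ V then (1:ℝ) else 0) := by
      rw [hT, Finset.sum_comm]
      apply Finset.sum_congr rfl
      intro g _
      rw [Finset.sum_comm]
      apply Finset.sum_congr rfl
      intro g' _
      rw [Finset.mul_sum]
      apply Finset.sum_congr rfl
      intro V _
      rw [mul_ite, mul_one, mul_zero]
    have step : ∀ g : M, ((q:ℝ)-1) * ∑ g' : M,
        (h g * h g') * ∑ V ∈ H, (if g - g' ∈ V then (1:ℝ) else 0) =
        ((q:ℝ) ^ r - (q:ℝ) ^ (r-1)) * h g ^ 2 := by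
      intro g
      rw [Finset.mul_sum]
      have inner : ∀ g' : M, ((q:ℝ)-1) * ((h g * h g') *
          ∑ V ∈ H, (if g - g' ∈ V then (1:ℝ) else 0)) =
          (h g * h g') * ((if g' = g then (q:ℝ) ^ r else (q:ℝ) ^ (r-1)) - 1) := by
        intro g'
        rw [hind (g - g')]
        rw [show ((q:ℝ)-1) * ((h g * h g') *
            (Nat.card {V : Submodule F M // Module.finrank F (M ⧸ V) = 1 ∧ g - g' ∈ V} : ℝ)) =
            (h g * h g') * (((q:ℝ)-1) *
            (Nat.card {V : Submodule F M // Module.finrank F (M ⧸ V) = 1 ∧ g - g' ∈ V} : ℝ))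
          from by ring]
        rw [hcount (g - g')]
        congr 2
        rw [show (g - g' = 0) = (g' = g) from propext (by rw [sub_eq_zero, eq_comm])]
      rw [Finset.sum_congr rfl (fun g' _ => inner g')]
      have split : ∀ g' : M, (h g * h g') *
          ((if g' = g then (q:ℝ)^r else (q:ℝ)^(r-1)) - 1) =
          (if g' = g then (h g * h g') * ((q:ℝ)^r - (q:ℝ)^(r-1)) else 0) +
          (h g * h g') * ((q:ℝ)^(r-1) - 1) := by
        intro g'
        split <;> ring
      rw [Finset.sum_congr rfl (fun g' _ => split g'), Finset.sum_add_distrib]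
      rw [Finset.sum_ite_eq' Finset.univ g
        (fun g' => (h g * h g') * ((q:ℝ)^r - (q:ℝ)^(r-1)))]
      simp only [Finset.mem_univ, if_true]
      have hz : ∑ g' : M, (h g * h g') * ((q:ℝ)^(r-1) - 1) =
          (h g * ((q:ℝ)^(r-1) - 1)) * ∑ g' : M, h g' := by
        rw [Finset.mul_sum]
        apply Finset.sum_congr rfl
        intro g' _
        ring
      rw [hz, hsum, mul_zero, add_zero, sq]
      ring
    have expand : ((q:ℝ) - 1) * ∑ V ∈ H, T V =
        ((q:ℝ) - 1) * ((q:ℝ) ^ (r-1) * ∑ g : M, h g ^ 2) := by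
      rw [swap, Finset.mul_sum, Finset.sum_congr rfl (fun g _ => step g),
        ← Finset.mul_sum]
      rw [show ((q:ℝ)^r - (q:ℝ)^(r-1)) = ((q:ℝ)-1) * (q:ℝ)^(r-1) from by
        rw [sub_mul, one_mul, hqq]]
      ring
    exact mul_left_cancel₀ hq1 expand
  -- assemble
  have hRHS : ∑ V ∈ H, norm2sq (quotFn V h) =
      ∑ V ∈ H, T V * ((q:ℝ) / ((q:ℝ)^r)^2) := by
    apply Finset.sum_congr rfl
    intro V hV
    rw [quot_norm2sq V h, hcV V hV]
    simp only [hT]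
    rw [div_div_eq_mul_div, div_eq_iff (by positivity)]
    field_simp
  rw [hRHS, ← Finset.sum_mul, hTsum]
  have hLHS : norm2sq h = (∑ g : M, h g ^ 2) / (q:ℝ)^r := by
    rw [norm2sq, expect, finsum_eq_sum_of_fintype, Nat.card_eq_fintype_card, hcardM]
    push_cast
    rfl
  rw [hLHS]
  rw [show (q:ℝ)^(r-1) * (∑ g : M, h g ^2) * ((q:ℝ)/((q:ℝ)^r)^2) =
    (∑ g : M, h g ^2) * ((q:ℝ) * (q:ℝ)^(r-1)) / ((q:ℝ)^r)^2 from by ring]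
  rw [hqq, sq]
  rw [div_eq_div_iff (by positivity) (by positivity)]
  ring

theorem stmt_6 (p n r : ℕ) (hp : p.Prime) (hn : 0 < n) (hr : 1 ≤ r)
    (F : Type) [Field F] [Fintype F] (hF : Fintype.card F = p ^ n)
    (f : (Fin r → F) → ℝ) :
    norm2sq (balanced f) =
      ∑ᶠ V ∈ {V : Submodule F (Fin r → F) | Module.finrank F ((Fin r → F) ⧸ V) = 1},
        norm2sq (quotFn V (balanced f)) := by
  have hq2 : 2 ≤ Fintype.card F := by
    rw [hF]
    calc 2 ≤ p := hp.two_le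
      _ ≤ p ^ n := Nat.le_self_pow (by omega) p
  have hrk : Module.finrank F (Fin r → F) = r := by
    simp [Module.finrank_pi]
  exact main_aux (Fintype.card F) r hr rfl hq2 hrk (balanced f)
    (sum_balanced_eq_zero f)
end

section
/- Let $M$ be a real number, $G$ a finite abelian group, and $f$ a non-constant real-valued function on $G$. Let $E$ be a linear homogeneous equation in $k \ge 3$ variables with integer coefficients each coprime to $|G|$. If $k$ is odd and $\Lambda_E[\tilde{f}] \le -M^{k-2}\|\tilde{f}\|_2^2$, then $\max_{g \in G} \tilde{f}(g) \ge M$, and consequently $\max_{g \in G} f(g) \ge \mathbb{E} f + M$. -/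
open scoped BigOperators
open Finset Function

section Aux
set_option linter.unusedSectionVars false
variable {G : Type*} [AddCommGroup G] [Fintype G] [DecidableEq G]

private lemma my_map_sum {ι : Type*} (ψ : AddChar G ℂ) (s : Finset ι) (a : ι → G) :
    ψ (∑ i ∈ s, a i) = ∏ i ∈ s, ψ (a i) := by
  classical
  induction s using Finset.induction_on with
  | empty => simp
  | insert _ _ h ih => rw [Finset.sum_insert h, Finset.prod_insert h, AddChar.map_add_eq_mul, ih]

private lemma key_identity {k : ℕ} (c : Fin k → ℤ) (H : G → ℂ)
    [DecidablePred fun x : Fin k → G => ∑ i, c i • x i = 0] :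
    (Fintype.card G : ℂ) *
        ∑ x ∈ Finset.univ.filter (fun x : Fin k → G => ∑ i, c i • x i = 0), ∏ i, H (x i)
      = ∑ ψ : AddChar G ℂ, ∏ i, ∑ x : G, H x * ψ (c i • x) := by
  have h1 : ∀ ψ : AddChar G ℂ, (∏ i, ∑ x : G, H x * ψ (c i • x))
      = ∑ x : Fin k → G, (∏ i, H (x i)) * ψ (∑ i, c i • x i) := by
    intro ψ
    rw [Finset.prod_univ_sum]
    simp only [Fintype.piFinset_univ]
    refine Finset.sum_congr rfl fun x _ => ?_
    rw [Finset.prod_mul_distrib, my_map_sum]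
  simp only [h1]
  rw [Finset.sum_comm]
  rw [Finset.mul_sum, Finset.sum_filter]
  refine Finset.sum_congr rfl fun x _ => ?_
  rw [← Finset.mul_sum, AddChar.sum_apply_eq_ite]
  split_ifs with h <;> simp [mul_comm]

private lemma smul_bij {c : ℤ} (hc : IsCoprime c (Nat.card G : ℤ)) :
    Function.Bijective (fun g : G => c • g) := by
  obtain ⟨u, v, huv⟩ := hc
  have hN : ∀ g : G, (Nat.card G : ℤ) • g = 0 := by
    intro g
    rw [natCast_zsmul, card_nsmul_eq_zero']
  have hinv : ∀ g : G, u • (c • g) = g := by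
    intro g
    rw [← mul_smul]
    calc (u * c) • g = (u * c) • g + v • ((Nat.card G : ℤ) • g) := by rw [hN]; simp
      _ = (u * c + v * (Nat.card G : ℤ)) • g := by rw [← mul_smul, add_smul]
      _ = g := by rw [huv, one_smul]
  have hinv' : ∀ g : G, c • (u • g) = g := by
    intro g; rw [← mul_smul, mul_comm, mul_smul]; exact hinv g
  exact Function.bijective_iff_has_inverse.2 ⟨fun g => u • g, hinv, hinv'⟩

/-- zsmul as an AddMonoidHom -/
private def smulHom (c : ℤ) : G →+ G := AddMonoidHom.mk' (fun g => c • g) (fun a b => smul_add c a b)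

private lemma tau_bij {c : ℤ} (hc : IsCoprime c (Nat.card G : ℤ)) :
    Function.Bijective (fun ψ : AddChar G ℂ => ψ.compAddMonoidHom (smulHom c)) := by
  have hinj := AddChar.compAddMonoidHom_injective_left (M := ℂ) (smulHom c) (smul_bij hc).surjective
  exact (Finite.injective_iff_bijective).1 hinj

private lemma tau_ne_zero {c : ℤ} (hc : IsCoprime c (Nat.card G : ℤ)) {ψ : AddChar G ℂ}
    (hψ : ψ ≠ 0) : ψ.compAddMonoidHom (smulHom c) ≠ 0 := by
  intro h
  apply hψ
  have h0 : (0 : AddChar G ℂ).compAddMonoidHom (smulHom c) = 0 := by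
    ext g; simp [AddChar.compAddMonoidHom]
  exact (tau_bij hc).injective (h.trans h0.symm)

private lemma sum_char_smul {c : ℤ} (hc : IsCoprime c (Nat.card G : ℤ)) {ψ : AddChar G ℂ}
    (hψ : ψ ≠ 0) : ∑ x : G, ψ (c • x) = 0 := by
  have : ∑ x : G, ψ (c • x) = ∑ x : G, (ψ.compAddMonoidHom (smulHom c)) x := by
    refine Finset.sum_congr rfl fun x _ => ?_
    simp [AddChar.compAddMonoidHom, smulHom]
  rw [this, AddChar.sum_eq_ite]
  simp [tau_ne_zero hc hψ]

private lemma parseval (H : G → ℂ) :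
    ∑ ψ : AddChar G ℂ, (∑ x : G, H x * ψ x) * (starRingEnd ℂ) (∑ x : G, H x * ψ x)
      = (Fintype.card G : ℂ) * ∑ x : G, H x * (starRingEnd ℂ) (H x) := by
  have key : ∀ ψ : AddChar G ℂ, (∑ x : G, H x * ψ x) * (starRingEnd ℂ) (∑ x : G, H x * ψ x)
      = ∑ x : G, ∑ y : G, H x * (starRingEnd ℂ) (H y) * ψ (x - y) := by
    intro ψ
    rw [map_sum, Finset.sum_mul_sum]
    refine Finset.sum_congr rfl fun x _ => Finset.sum_congr rfl fun y _ => ?_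
    rw [map_mul, ← AddChar.inv_apply_eq_conj, ← AddChar.map_neg_eq_inv,
      sub_eq_add_neg, AddChar.map_add_eq_mul]
    ring
  simp only [key]
  rw [Finset.sum_comm]
  rw [Finset.mul_sum]
  refine Finset.sum_congr rfl fun x _ => ?_
  have h2 : ∀ y : G, ∑ ψ : AddChar G ℂ, H x * (starRingEnd ℂ) (H y) * ψ (x - y)
      = H x * (starRingEnd ℂ) (H y) * (if x - y = 0 then (Fintype.card G : ℂ) else 0) := by
    intro y
    rw [← Finset.mul_sum, AddChar.sum_apply_eq_ite]
  rw [Finset.sum_comm]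
  simp only [h2, sub_eq_zero, mul_ite, mul_zero]
  rw [Finset.sum_ite_eq univ x (fun y => H x * (starRingEnd ℂ) (H y) * (Fintype.card G : ℂ))]
  simp [mul_comm]

private lemma card_solutions {k : ℕ} (hk : 1 ≤ k) (c : Fin k → ℤ)
    (hc : ∀ i, IsCoprime (c i) (Nat.card G : ℤ))
    [DecidablePred fun x : Fin k → G => ∑ i, c i • x i = 0] :
    (((Finset.univ.filter (fun x : Fin k → G => ∑ i, c i • x i = 0)).card : ℝ))
      = (Fintype.card G : ℝ) ^ (k - 1) := by
  have h := key_identity c (fun _ : G => (1 : ℂ))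
  have i0 : Fin k := ⟨0, by omega⟩
  have h2 : ∀ ψ : AddChar G ℂ, (∏ i, ∑ x : G, (1 : ℂ) * ψ (c i • x))
      = if ψ = 0 then (Fintype.card G : ℂ) ^ k else 0 := by
    intro ψ
    by_cases hψ : ψ = 0
    · subst hψ
      simp
    · rw [if_neg hψ]
      refine Finset.prod_eq_zero (Finset.mem_univ i0) ?_
      simp [sum_char_smul (hc i0) hψ]
  rw [funext h2] at h
  simp only [Finset.prod_const_one, Finset.sum_const, nsmul_eq_mul, mul_one] at h
  rw [Finset.sum_ite_eq' Finset.univ (0 : AddChar G ℂ) (fun _ => (Fintype.card G : ℂ) ^ k),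
    if_pos (Finset.mem_univ _)] at h
  have hNne : (Fintype.card G : ℂ) ≠ 0 := Nat.cast_ne_zero.2 Fintype.card_ne_zero
  have hpow : (Fintype.card G : ℂ) ^ k
      = (Fintype.card G : ℂ) * (Fintype.card G : ℂ) ^ (k - 1) := by
    rw [← pow_succ']
    congr 1
    omega
  rw [hpow] at h
  have h3 := mul_left_cancel₀ hNne h
  exact_mod_cast h3

end Aux

theorem stmt_7 (M : ℝ) {G : Type*} [AddCommGroup G] [Finite G]
    (f : G → ℝ) (hf : ∃ a b : G, f a ≠ f b)
    {k : ℕ} (hk : 3 ≤ k) (c : Fin k → ℤ)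
    (hc : ∀ i, IsCoprime (c i) (Nat.card G : ℤ))
    (hodd : Odd k)
    (hlam : lam c (balanced f) ≤ -M ^ (k - 2) * norm2sq (balanced f)) :
    (∃ g : G, balanced f g ≥ M) ∧ (∃ g : G, f g ≥ expect f + M) := by
  classical
  haveI : Fintype G := Fintype.ofFinite G
  haveI : Nonempty G := ⟨0⟩
  set N := Fintype.card G with hNdef
  have hN : 0 < N := Fintype.card_pos
  have hNR : (0 : ℝ) < (N : ℝ) := by exact_mod_cast hN
  have hNcard : Nat.card G = N := Nat.card_eq_fintype_card
  set h : G → ℝ := balanced f with hhdef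
  have hexp : expect f = (∑ g : G, f g) / N := by
    rw [show _root_.expect f = (∑ᶠ g, f g) / (Nat.card G : ℝ) from rfl,
      finsum_eq_sum_of_fintype, hNcard]
  have hsum0 : ∑ g : G, h g = 0 := by
    simp only [hhdef, balanced, Finset.sum_sub_distrib, Finset.sum_const, card_univ,
      nsmul_eq_mul, hexp]
    field_simp
    rw [← hNdef]; ring
  obtain ⟨a, b, hab⟩ := hf
  have hab' : h a ≠ h b := by simpa [hhdef, balanced, sub_left_inj] using hab
  have hne : ∃ g, h g ≠ 0 := by
    by_contra hcon
    push_neg at hcon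
    exact hab' ((hcon a).trans (hcon b).symm)
  set Sh2 : ℝ := ∑ g : G, h g ^ 2 with hSh2def
  have hSh2 : 0 < Sh2 := by
    obtain ⟨g₁, hg₁⟩ := hne
    refine Finset.sum_pos' (fun g _ => sq_nonneg _) ⟨g₁, Finset.mem_univ _, ?_⟩
    exact lt_of_le_of_ne (sq_nonneg _) (Ne.symm (pow_ne_zero 2 hg₁))
  have hn2 : norm2sq h = Sh2 / N := by
    rw [show norm2sq h = (∑ᶠ g, h g ^ 2) / (Nat.card G : ℝ) from rfl,
      finsum_eq_sum_of_fintype, hNcard]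
  obtain ⟨g₀, -, hg₀⟩ := Finset.exists_max_image Finset.univ h Finset.univ_nonempty
  set m : ℝ := h g₀ with hmdef
  have hm : ∀ g, h g ≤ m := fun g => hg₀ g (Finset.mem_univ g)
  have hm0 : 0 < m := by
    have hpos : ∃ g, 0 < h g := by
      by_contra hcon
      push_neg at hcon
      obtain ⟨g₁, hg₁⟩ := hne
      exact hg₁ ((Finset.sum_eq_zero_iff_of_nonpos (fun g _ => hcon g)).1 hsum0 g₁
        (Finset.mem_univ _))
    obtain ⟨g₁, hg₁⟩ := hpos
    exact lt_of_lt_of_le hg₁ (hm g₁)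
  by_cases hcase : M ≤ m
  · constructor
    · exact ⟨g₀, hcase⟩
    · refine ⟨g₀, ?_⟩
      have : h g₀ = f g₀ - expect f := rfl
      linarith [hcase]
  · exfalso
    push_neg at hcase
    haveI : NeZero k := ⟨by omega⟩
    set S : Finset (Fin k → G) :=
      Finset.univ.filter (fun x : Fin k → G => ∑ i, c i • x i = 0) with hSdef
    set H : G → ℂ := fun g => ((h g : ℝ) : ℂ) with hH
    set T : ℝ := ∑ x ∈ S, ∏ i, h (x i) with hTdef
    set F : Fin k → AddChar G ℂ → ℂ := fun i ψ => ∑ x : G, H x * ψ (c i • x) with hF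
    have hTc : ((T : ℝ) : ℂ) = ∑ x ∈ S, ∏ i, H (x i) := by
      simp only [hTdef, hH]
      push_cast
      rfl
    have hkey : (N : ℂ) * ((T : ℝ) : ℂ) = ∑ ψ : AddChar G ℂ, ∏ i, F i ψ := by
      rw [hTc]
      simp only [hF, hSdef, hNdef]
      exact key_identity c H
    -- the trivial character contributes zero
    have hsumH : ∑ x : G, H x = 0 := by
      have : ∑ x : G, H x = ((∑ x : G, h x : ℝ) : ℂ) := by push_cast; rfl
      rw [this, hsum0]
      simp
    set A : Finset (AddChar G ℂ) := Finset.univ.filter (fun ψ : AddChar G ℂ => ¬ψ = 0) with hA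
    have hsplit : ∑ ψ : AddChar G ℂ, ∏ i, F i ψ = ∑ ψ ∈ A, ∏ i, F i ψ := by
      rw [← Finset.sum_filter_add_sum_filter_not Finset.univ (fun ψ : AddChar G ℂ => ψ = 0)]
      have h1 : Finset.univ.filter (fun ψ : AddChar G ℂ => ψ = 0) = {0} := by
        ext ψ; simp
      have hF0 : F (0 : Fin k) (0 : AddChar G ℂ) = 0 := by
        simp only [hF]
        simpa using hsumH
      rw [h1, Finset.sum_singleton, Finset.prod_eq_zero (Finset.mem_univ (0 : Fin k)) hF0,
        zero_add]
    -- pointwise bound on Fourier coefficients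
    have hb1 : ∀ (i : Fin k) (ψ : AddChar G ℂ), ψ ≠ 0 → ‖F i ψ‖ ≤ (N : ℝ) * m := by
      intro i ψ hψ
      have hzero : ∑ x : G, ((m : ℝ) : ℂ) * ψ (c i • x) = 0 := by
        rw [← Finset.mul_sum, sum_char_smul (hc i) hψ, mul_zero]
      have hre : F i ψ = ∑ x : G, (H x - ((m : ℝ) : ℂ)) * ψ (c i • x) := by
        simp only [sub_mul, Finset.sum_sub_distrib, hzero, sub_zero, hF]
      rw [hre]
      calc ‖∑ x : G, (H x - ((m : ℝ) : ℂ)) * ψ (c i • x)‖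
          ≤ ∑ x : G, ‖(H x - ((m : ℝ) : ℂ)) * ψ (c i • x)‖ := norm_sum_le _ _
        _ = ∑ x : G, (m - h x) := by
            refine Finset.sum_congr rfl fun x _ => ?_
            rw [norm_mul, AddChar.norm_apply, mul_one]
            have e : H x - ((m : ℝ) : ℂ) = ((h x - m : ℝ) : ℂ) := by
              simp only [hH]; push_cast; ring
            rw [e, Complex.norm_real, Real.norm_eq_abs, abs_of_nonpos (by linarith [hm x]),
              neg_sub]
        _ = (N : ℝ) * m - ∑ x : G, h x := by
            rw [Finset.sum_sub_distrib, Finset.sum_const, Finset.card_univ, nsmul_eq_mul]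
        _ = (N : ℝ) * m := by rw [hsum0, sub_zero]
    -- Parseval for each coefficient
    have hb2 : ∀ i : Fin k, ∑ ψ : AddChar G ℂ, ‖F i ψ‖ ^ 2 = (N : ℝ) * Sh2 := by
      intro i
      have hre : ∀ ψ : AddChar G ℂ,
          F i ψ = ∑ x : G, H x * (ψ.compAddMonoidHom (smulHom (c i))) x := by
        intro ψ
        simp only [hF]
        rfl
      have hbij := tau_bij (G := G) (hc i)
      have hsum : ∑ ψ : AddChar G ℂ, ‖F i ψ‖ ^ 2
          = ∑ ψ : AddChar G ℂ, ‖∑ x : G, H x * ψ x‖ ^ 2 := by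
        simp only [hre]
        exact Fintype.sum_bijective _ hbij _ _ (fun ψ => rfl)
      rw [hsum]
      have hp := parseval H
      have e1 : ∀ z : ℂ, z * (starRingEnd ℂ) z = ((‖z‖ ^ 2 : ℝ) : ℂ) := by
        intro z
        rw [Complex.mul_conj]
        norm_cast
        rw [Complex.normSq_eq_norm_sq]
      have e2 : ∀ x : G, H x * (starRingEnd ℂ) (H x) = ((h x ^ 2 : ℝ) : ℂ) := by
        intro x
        simp only [hH, Complex.conj_ofReal]
        push_cast
        ring
      simp only [e1] at hp
      rw [← Complex.ofReal_sum, ← Complex.ofReal_sum, ← Complex.ofReal_natCast,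
        ← Complex.ofReal_mul, Complex.ofReal_inj] at hp
      rw [hp, hSh2def]
      rw [show ((N : ℝ) : ℝ) * (∑ g : G, h g ^ 2) = (N : ℝ) * ∑ g : G, h g ^ 2 from rfl]
      congr 1
      refine Finset.sum_congr rfl fun x _ => ?_
      simp only [hH]
      rw [Complex.norm_real, Real.norm_eq_abs, sq_abs]
    -- product bound for each nontrivial character
    have h01 : (0 : Fin k) ≠ (1 : Fin k) := by
      intro he
      have h2 := congrArg Fin.val he
      rw [Fin.val_zero, Fin.val_one', Nat.mod_eq_of_lt (by omega : 1 < k)] at h2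
      exact absurd h2 (by omega)
    have e1mem : (1 : Fin k) ∈ Finset.univ.erase (0 : Fin k) :=
      Finset.mem_erase.2 ⟨h01.symm, Finset.mem_univ _⟩
    have hprod : ∀ ψ ∈ A, ‖∏ i, F i ψ‖ ≤ ((N : ℝ) * m) ^ (k - 2) * (‖F 0 ψ‖ * ‖F 1 ψ‖) := by
      intro ψ hψA
      have hψ : ψ ≠ 0 := by
        have := (Finset.mem_filter.1 hψA).2
        simpa using this
      rw [norm_prod, ← Finset.prod_erase_mul Finset.univ _ (Finset.mem_univ (0 : Fin k)),
        ← Finset.prod_erase_mul _ _ e1mem]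
      have hcard : ((Finset.univ.erase (0 : Fin k)).erase 1).card = k - 2 := by
        rw [Finset.card_erase_of_mem e1mem, Finset.card_erase_of_mem (Finset.mem_univ _),
          Finset.card_univ, Fintype.card_fin]
        omega
      have hsmall : ∏ i ∈ (Finset.univ.erase (0 : Fin k)).erase 1, ‖F i ψ‖
          ≤ ((N : ℝ) * m) ^ (k - 2) := by
        have hp2 := Finset.prod_le_prod (s := (Finset.univ.erase (0 : Fin k)).erase 1)
          (fun i _ => norm_nonneg (F i ψ)) (fun i _ => hb1 i ψ hψ)
        rwa [Finset.prod_const, hcard] at hp2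
      calc (∏ i ∈ (Finset.univ.erase (0 : Fin k)).erase 1, ‖F i ψ‖) * ‖F 1 ψ‖ * ‖F 0 ψ‖
          ≤ ((N : ℝ) * m) ^ (k - 2) * ‖F 1 ψ‖ * ‖F 0 ψ‖ :=
            mul_le_mul_of_nonneg_right
              (mul_le_mul_of_nonneg_right hsmall (norm_nonneg _)) (norm_nonneg _)
        _ = ((N : ℝ) * m) ^ (k - 2) * (‖F 0 ψ‖ * ‖F 1 ψ‖) := by ring
    -- Cauchy-Schwarz
    have hCS : ∑ ψ ∈ A, ‖F 0 ψ‖ * ‖F 1 ψ‖ ≤ (N : ℝ) * Sh2 := by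
      have h2 := Finset.sum_mul_sq_le_sq_mul_sq A (fun ψ => ‖F 0 ψ‖) (fun ψ => ‖F 1 ψ‖)
      have hA0 : ∑ ψ ∈ A, ‖F 0 ψ‖ ^ 2 ≤ (N : ℝ) * Sh2 := by
        rw [← hb2 0]
        exact Finset.sum_le_sum_of_subset_of_nonneg (Finset.filter_subset _ _)
          (fun ψ _ _ => sq_nonneg _)
      have hA1 : ∑ ψ ∈ A, ‖F 1 ψ‖ ^ 2 ≤ (N : ℝ) * Sh2 := by
        rw [← hb2 1]
        exact Finset.sum_le_sum_of_subset_of_nonneg (Finset.filter_subset _ _)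
          (fun ψ _ _ => sq_nonneg _)
      have hsumnn : (0 : ℝ) ≤ ∑ ψ ∈ A, ‖F 0 ψ‖ * ‖F 1 ψ‖ :=
        Finset.sum_nonneg fun ψ _ => mul_nonneg (norm_nonneg _) (norm_nonneg _)
      have hNS : (0 : ℝ) ≤ (N : ℝ) * Sh2 := by positivity
      have hsq : (∑ ψ ∈ A, ‖F 0 ψ‖ * ‖F 1 ψ‖) ^ 2 ≤ ((N : ℝ) * Sh2) ^ 2 := by
        refine le_trans h2 ?_
        have hnn0 : (0 : ℝ) ≤ ∑ ψ ∈ A, ‖F 0 ψ‖ ^ 2 :=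
          Finset.sum_nonneg fun ψ _ => sq_nonneg _
        have hnn1 : (0 : ℝ) ≤ ∑ ψ ∈ A, ‖F 1 ψ‖ ^ 2 :=
          Finset.sum_nonneg fun ψ _ => sq_nonneg _
        nlinarith [hA0, hA1, hnn0, hnn1]
      nlinarith [hsq, hsumnn, hNS]
    -- assemble
    have hmain : (N : ℝ) * |T| ≤ ((N : ℝ) * m) ^ (k - 2) * ((N : ℝ) * Sh2) := by
      calc (N : ℝ) * |T| = ‖(N : ℂ) * ((T : ℝ) : ℂ)‖ := by
            rw [norm_mul, Complex.norm_natCast, Complex.norm_real, Real.norm_eq_abs]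
        _ = ‖∑ ψ ∈ A, ∏ i, F i ψ‖ := by rw [hkey, hsplit]
        _ ≤ ∑ ψ ∈ A, ‖∏ i, F i ψ‖ := norm_sum_le _ _
        _ ≤ ∑ ψ ∈ A, ((N : ℝ) * m) ^ (k - 2) * (‖F 0 ψ‖ * ‖F 1 ψ‖) := Finset.sum_le_sum hprod
        _ = ((N : ℝ) * m) ^ (k - 2) * ∑ ψ ∈ A, ‖F 0 ψ‖ * ‖F 1 ψ‖ := by rw [← Finset.mul_sum]
        _ ≤ ((N : ℝ) * m) ^ (k - 2) * ((N : ℝ) * Sh2) := by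
            have hpownn : (0 : ℝ) ≤ ((N : ℝ) * m) ^ (k - 2) := by positivity
            exact mul_le_mul_of_nonneg_left hCS hpownn
    have hTabs : |T| ≤ (N : ℝ) ^ (k - 2) * m ^ (k - 2) * Sh2 := by
      have e : ((N : ℝ) * m) ^ (k - 2) * ((N : ℝ) * Sh2)
          = (N : ℝ) * ((N : ℝ) ^ (k - 2) * m ^ (k - 2) * Sh2) := by
        rw [mul_pow]; ring
      rw [e] at hmain
      exact le_of_mul_le_mul_left hmain hNR
    -- rewrite lam
    have hcard := card_solutions (G := G) (by omega : 1 ≤ k) c hc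
    have hlamT : lam c h = T / (N : ℝ) ^ (k - 1) := by
      rw [show lam c h = (∑ᶠ x ∈ {x : Fin k → G | ∑ i, c i • x i = 0}, ∏ i, h (x i)) /
          (Nat.card {x : Fin k → G // ∑ i, c i • x i = 0} : ℝ) from rfl]
      congr 1
      · have hset : {x : Fin k → G | ∑ i, c i • x i = 0} = ↑S := by
          ext x; simp [hSdef]
        rw [hset, finsum_mem_coe_finset]
      · rw [Nat.card_eq_fintype_card, Fintype.card_subtype]
        convert hcard using 2
    have hpowk1 : (0 : ℝ) < (N : ℝ) ^ (k - 1) := pow_pos hNR _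
    rw [hlamT, hn2] at hlam
    have hT2 : T ≤ -M ^ (k - 2) * (Sh2 / N) * (N : ℝ) ^ (k - 1) := (div_le_iff₀ hpowk1).1 hlam
    have hNk1 : (N : ℝ) ^ (k - 1) = (N : ℝ) ^ (k - 2) * N := by
      rw [← pow_succ]
      congr 1
      omega
    have hT3 : T ≤ -(M ^ (k - 2) * Sh2 * (N : ℝ) ^ (k - 2)) := by
      rw [hNk1] at hT2
      calc T ≤ -M ^ (k - 2) * (Sh2 / N) * ((N : ℝ) ^ (k - 2) * N) := hT2
        _ = -(M ^ (k - 2) * Sh2 * (N : ℝ) ^ (k - 2)) := by field_simp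
    have hlow : -((N : ℝ) ^ (k - 2) * m ^ (k - 2) * Sh2) ≤ T :=
      le_trans (neg_le_neg hTabs) (neg_abs_le T)
    have hpos2 : (0 : ℝ) < Sh2 * (N : ℝ) ^ (k - 2) := by positivity
    have hlt : m ^ (k - 2) < M ^ (k - 2) := pow_lt_pow_left₀ hcase hm0.le (by omega)
    have hx : M ^ (k - 2) * Sh2 * (N : ℝ) ^ (k - 2)
        ≤ (N : ℝ) ^ (k - 2) * m ^ (k - 2) * Sh2 := by linarith
    have hy : M ^ (k - 2) * (Sh2 * (N : ℝ) ^ (k - 2))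
        ≤ m ^ (k - 2) * (Sh2 * (N : ℝ) ^ (k - 2)) := by
      calc M ^ (k - 2) * (Sh2 * (N : ℝ) ^ (k - 2))
          = M ^ (k - 2) * Sh2 * (N : ℝ) ^ (k - 2) := by ring
        _ ≤ (N : ℝ) ^ (k - 2) * m ^ (k - 2) * Sh2 := hx
        _ = m ^ (k - 2) * (Sh2 * (N : ℝ) ^ (k - 2)) := by ring
    exact absurd (le_of_mul_le_mul_right hy hpos2) (not_le.2 hlt)
end

section
/- Let $M$ be a real number, $G$ a finite abelian group, and $f$ a non-constant real-valued function on $G$. Let $E$ be a linear homogeneous equation in $k \ge 3$ variables with integer coefficients each coprime to $|G|$. If $k$ is even and $\Lambda_E[\tilde{f}] \ge M^{k-2}\|\tilde{f}\|_2^2$, then $\max_{g \in G} \tilde{f}(g) \ge M$, and consequently $\max_{g \in G} f(g) \ge \mathbb{E} f + M$. -/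
open scoped BigOperators

open Finset
set_option linter.unusedSectionVars false
set_option maxHeartbeats 1000000

namespace Stmt8Aux
variable {G : Type*} [AddCommGroup G] [Fintype G] [DecidableEq G]

lemma smul_bij {c : ℤ} (hc : IsCoprime c (Fintype.card G : ℤ)) :
    Function.Bijective (fun x : G => c • x) := by
  obtain ⟨a, b, hab⟩ := hc
  have key : ∀ x : G, (a * c) • x = x := fun x => by
    have h1 : (a * c + b * (Fintype.card G : ℤ)) • x = x := by rw [hab, one_smul]
    rwa [add_smul, mul_smul b, natCast_zsmul, card_nsmul_eq_zero, smul_zero, add_zero] at h1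
  constructor
  · intro x y h
    simp only at h
    have hx := key x; have hy := key y
    rw [mul_smul] at hx hy
    rw [← hx, ← hy, h]
  · intro y
    exact ⟨a • y, by simp only [← mul_smul, mul_comm c a, key]⟩

noncomputable def charMap (c : ℤ) (ψ : AddChar G ℂ) : AddChar G ℂ :=
  ψ.compAddMonoidHom (AddMonoidHom.mk' (fun x => c • x) (fun a b => smul_add c a b))

@[simp] lemma charMap_apply (c : ℤ) (ψ : AddChar G ℂ) (x : G) : charMap c ψ x = ψ (c • x) := rfl

lemma charMap_bij {c : ℤ} (hc : IsCoprime c (Fintype.card G : ℤ)) :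
    Function.Bijective (charMap (G := G) c) :=
  Finite.injective_iff_bijective.1
    (AddChar.compAddMonoidHom_injective_left _ (smul_bij hc).surjective)

@[simp] lemma charMap_zero (c : ℤ) : charMap (G := G) c 0 = 0 := by
  ext x; simp [charMap, AddChar.compAddMonoidHom]

lemma charMap_ne_zero {c : ℤ} (hc : IsCoprime c (Fintype.card G : ℤ)) {ψ : AddChar G ℂ}
    (hψ : ψ ≠ 0) : charMap c ψ ≠ 0 := by
  intro h
  exact hψ ((charMap_bij hc).injective (by rw [h, charMap_zero]))

lemma char_map_sum (ψ : AddChar G ℂ) {ι : Type*} (s : Finset ι) (a : ι → G) :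
    ψ (∑ i ∈ s, a i) = ∏ i ∈ s, ψ (a i) := by
  induction s using Finset.cons_induction with
  | empty => simp
  | cons i s hi ih => rw [Finset.sum_cons, Finset.prod_cons, AddChar.map_add_eq_mul, ih]

lemma key_id {k : ℕ} (c : Fin k → ℤ) (F : G → ℂ) :
    (Fintype.card G : ℂ) *
      ∑ x ∈ univ.filter (fun x : Fin k → G => ∑ i, c i • x i = 0), ∏ i, F (x i)
      = ∑ ψ : AddChar G ℂ, ∏ i, ∑ y : G, F y * ψ (c i • y) := by
  have h1 : ∀ ψ : AddChar G ℂ, (∏ i, ∑ y : G, F y * ψ (c i • y))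
      = ∑ x ∈ Fintype.piFinset (fun _ : Fin k => (univ : Finset G)),
          ∏ i, (F (x i) * ψ (c i • x i)) := fun ψ => Finset.prod_univ_sum _ _
  rw [Finset.sum_congr rfl fun ψ _ => h1 ψ, Finset.sum_comm]
  have h2 : ∀ x : Fin k → G, (∑ ψ : AddChar G ℂ, ∏ i, (F (x i) * ψ (c i • x i)))
      = (∏ i, F (x i)) * (if (∑ i, c i • x i) = 0 then (Fintype.card G : ℂ) else 0) := by
    intro x
    have : ∀ ψ : AddChar G ℂ, (∏ i, (F (x i) * ψ (c i • x i)))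
        = (∏ i, F (x i)) * ψ (∑ i, c i • x i) := by
      intro ψ
      rw [Finset.prod_mul_distrib, char_map_sum]
    rw [Finset.sum_congr rfl fun ψ _ => this ψ, ← Finset.mul_sum,
      AddChar.sum_apply_eq_ite]
  rw [Fintype.piFinset_univ, Finset.sum_congr rfl fun x _ => h2 x]
  rw [Finset.mul_sum, Finset.sum_filter]
  congr 1; ext x
  split <;> simp [mul_comm]

lemma parseval (g : G → ℝ) :
    ∑ ψ : AddChar G ℂ, ‖∑ y, (g y : ℂ) * ψ y‖ ^ 2
      = (Fintype.card G : ℝ) * ∑ y, g y ^ 2 := by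
  have key : ∑ ψ : AddChar G ℂ, (∑ y, (g y : ℂ) * ψ y) * (starRingEnd ℂ) (∑ y, (g y : ℂ) * ψ y)
      = (Fintype.card G : ℂ) * ∑ y, (g y : ℂ) ^ 2 := by
    have h1 : ∀ ψ : AddChar G ℂ, (∑ y, (g y : ℂ) * ψ y) * (starRingEnd ℂ) (∑ y, (g y : ℂ) * ψ y)
        = ∑ a : G, ∑ b : G, (g a : ℂ) * (g b : ℂ) * ψ (a - b) := by
      intro ψ
      rw [map_sum, Finset.sum_mul_sum]
      refine Finset.sum_congr rfl fun a _ => Finset.sum_congr rfl fun b _ => ?_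
      rw [map_mul, Complex.conj_ofReal, ← AddChar.map_neg_eq_conj, sub_eq_add_neg,
        AddChar.map_add_eq_mul]
      ring
    rw [Finset.sum_congr rfl fun ψ _ => h1 ψ, Finset.sum_comm]
    rw [Finset.sum_congr rfl fun a (_ : a ∈ univ) => (Finset.sum_comm ..)]
    have h2 : ∀ a : G, ∑ b : G, ∑ ψ : AddChar G ℂ, (g a : ℂ) * (g b : ℂ) * ψ (a - b)
        = (Fintype.card G : ℂ) * (g a : ℂ) ^ 2 := by
      intro a
      have : ∀ b : G, ∑ ψ : AddChar G ℂ, (g a : ℂ) * (g b : ℂ) * ψ (a - b)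
          = (g a : ℂ) * (g b : ℂ) * (if a - b = 0 then (Fintype.card G : ℂ) else 0) := by
        intro b
        rw [← Finset.mul_sum, AddChar.sum_apply_eq_ite]
      rw [Finset.sum_congr rfl fun b _ => this b]
      simp only [sub_eq_zero, mul_ite, mul_zero]
      rw [Finset.sum_ite_eq univ a (fun b => (g a : ℂ) * (g b : ℂ) * (Fintype.card G : ℂ))]
      simp [sq]; ring
    rw [Finset.sum_congr rfl fun a _ => h2 a, ← Finset.mul_sum]
  have cast_eq : ((∑ ψ : AddChar G ℂ, ‖∑ y, (g y : ℂ) * ψ y‖ ^ 2 : ℝ) : ℂ)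
      = ((Fintype.card G : ℝ) * ∑ y, g y ^ 2 : ℝ) := by
    push_cast
    rw [← key]
    refine Finset.sum_congr rfl fun ψ _ => ?_
    rw [Complex.mul_conj, Complex.normSq_eq_norm_sq]
    push_cast
    ring
  exact_mod_cast cast_eq

lemma count_sol {k : ℕ} (hk : 1 ≤ k) (c : Fin k → ℤ)
    (hc : ∀ i, IsCoprime (c i) (Fintype.card G : ℤ)) :
    ((univ.filter (fun x : Fin k → G => ∑ i, c i • x i = 0)).card : ℝ)
      = (Fintype.card G : ℝ) ^ (k - 1) := by
  have h := key_id (G := G) c (fun _ => (1 : ℂ))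
  simp only [Finset.prod_const_one, Finset.sum_const, nsmul_eq_mul, mul_one, one_mul] at h
  have hterm : ∀ ψ : AddChar G ℂ, (∏ i, ∑ y : G, ψ (c i • y))
      = if ψ = 0 then ((Fintype.card G : ℂ)) ^ k else 0 := by
    intro ψ
    rcases eq_or_ne ψ 0 with rfl | hψ
    · simp
    · rw [if_neg hψ]
      refine Finset.prod_eq_zero (Finset.mem_univ (⟨0, hk⟩ : Fin k)) ?_
      have : ∑ y : G, ψ (c ⟨0, hk⟩ • y) = ∑ y : G, charMap (c ⟨0, hk⟩) ψ y := by
        simp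
      rw [this, AddChar.sum_eq_zero_iff_ne_zero.2 (charMap_ne_zero (hc _) hψ)]
  rw [Finset.sum_congr rfl fun ψ _ => hterm ψ, Finset.sum_ite_eq' Finset.univ (0 : AddChar G ℂ)
    (fun _ => ((Fintype.card G : ℂ)) ^ k), if_pos (Finset.mem_univ _)] at h
  have hn : (Fintype.card G : ℂ) ≠ 0 := Nat.cast_ne_zero.2 Fintype.card_ne_zero
  have hcard : ((univ.filter (fun x : Fin k → G => ∑ i, c i • x i = 0)).card : ℂ)
      = (Fintype.card G : ℂ) ^ (k - 1) := by
    apply mul_left_cancel₀ hn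
    rw [h, ← pow_succ', Nat.sub_add_cancel hk]
  exact_mod_cast hcard

lemma norm_H_le {g : G → ℝ} {m : ℝ} (hm0 : 0 ≤ m) (hgm : ∀ x, g x ≤ m)
    (hsum : ∑ x, g x = 0) (χ : AddChar G ℂ) :
    ‖∑ y, (g y : ℂ) * χ y‖ ≤ Fintype.card G * m := by
  rcases eq_or_ne χ 0 with rfl | hχ
  · have h0 : ∑ y, (g y : ℂ) * (0 : AddChar G ℂ) y = 0 := by
      simp only [AddChar.zero_apply, mul_one]
      exact_mod_cast congrArg (Complex.ofReal) hsum
    rw [h0, norm_zero]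
    positivity
  · have hz : ∑ y : G, χ y = 0 := AddChar.sum_eq_zero_iff_ne_zero.2 hχ
    have heq : ∑ y, (g y : ℂ) * χ y = ∑ y, ((g y : ℂ) - m) * χ y := by
      rw [Finset.sum_congr rfl fun y _ => (sub_mul _ _ _), Finset.sum_sub_distrib,
        ← Finset.mul_sum, hz, mul_zero, sub_zero]
    rw [heq]
    calc ‖∑ y, ((g y : ℂ) - m) * χ y‖ ≤ ∑ y, ‖((g y : ℂ) - m) * χ y‖ := norm_sum_le _ _
      _ = ∑ y, (m - g y) := by
          refine Finset.sum_congr rfl fun y _ => ?_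
          rw [norm_mul, AddChar.norm_apply, mul_one, ← Complex.ofReal_sub,
            Complex.norm_real, Real.norm_eq_abs, abs_of_nonpos (by linarith [hgm y])]
          ring
      _ = Fintype.card G * m := by
          rw [Finset.sum_sub_distrib, hsum, sub_zero, Finset.sum_const, card_univ, nsmul_eq_mul]
      _ ≤ Fintype.card G * m := le_refl _

lemma main_bound {k : ℕ} (hk : 3 ≤ k) (c : Fin k → ℤ)
    (hc : ∀ i, IsCoprime (c i) (Fintype.card G : ℤ)) {g : G → ℝ} {m : ℝ}
    (hm0 : 0 ≤ m) (hgm : ∀ x, g x ≤ m) (hsum : ∑ x, g x = 0) :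
    ∑ x ∈ univ.filter (fun x : Fin k → G => ∑ i, c i • x i = 0), ∏ i, g (x i)
      ≤ (Fintype.card G : ℝ) ^ (k - 2) * m ^ (k - 2) * ∑ y, g y ^ 2 := by
  have hne : Nonempty G := ⟨0⟩
  set n : ℝ := (Fintype.card G : ℝ) with hn
  have hnpos : (0 : ℝ) < n := by rw [hn]; exact_mod_cast Fintype.card_pos
  set H : AddChar G ℂ → ℂ := fun χ => ∑ y, (g y : ℂ) * χ y with hH
  set T : ℝ := ∑ x ∈ univ.filter (fun x : Fin k → G => ∑ i, c i • x i = 0), ∏ i, g (x i) with hT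
  set P : ℝ := ∑ ψ : AddChar G ℂ, ‖H ψ‖ ^ 2 with hP
  have hPn : 0 ≤ P := Finset.sum_nonneg fun ψ _ => by positivity
  have hTC : ((T : ℂ)) = ∑ x ∈ univ.filter (fun x : Fin k → G => ∑ i, c i • x i = 0),
      ∏ i, ((g (x i) : ℂ)) := by push_cast [hT]; rfl
  have hkey : (Fintype.card G : ℂ) * (T : ℂ) = ∑ ψ : AddChar G ℂ, ∏ i, H (charMap (c i) ψ) := by
    rw [hTC, key_id c (fun y => (g y : ℂ))]
    rfl
  have reindex : ∀ i : Fin k, ∑ ψ : AddChar G ℂ, ‖H (charMap (c i) ψ)‖ ^ 2 = P := by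
    intro i
    exact Fintype.sum_bijective (charMap (c i)) (charMap_bij (hc i)) _ _ (fun ψ => rfl)
  have h0 : (0 : ℕ) < k := by omega
  have h1 : (1 : ℕ) < k := by omega
  set i0 : Fin k := ⟨0, h0⟩
  set i1 : Fin k := ⟨1, h1⟩
  have hi01 : i1 ≠ i0 := by simp [i0, i1, Fin.ext_iff]
  set s : Finset (Fin k) := (univ.erase i0).erase i1 with hs
  have hscard : s.card = k - 2 := by
    rw [hs, Finset.card_erase_of_mem (Finset.mem_erase.2 ⟨hi01, Finset.mem_univ _⟩),
      Finset.card_erase_of_mem (Finset.mem_univ _), Finset.card_univ, Fintype.card_fin]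
    omega
  have prod_bound : ∀ ψ : AddChar G ℂ, ∏ i, ‖H (charMap (c i) ψ)‖
      ≤ (n * m) ^ (k - 2) * (‖H (charMap (c i0) ψ)‖ * ‖H (charMap (c i1) ψ)‖) := by
    intro ψ
    have split : ∏ i, ‖H (charMap (c i) ψ)‖
        = ‖H (charMap (c i0) ψ)‖ * (‖H (charMap (c i1) ψ)‖ * ∏ i ∈ s, ‖H (charMap (c i) ψ)‖) := by
      rw [← Finset.mul_prod_erase univ _ (Finset.mem_univ i0),
        ← Finset.mul_prod_erase _ _ (Finset.mem_erase.2 ⟨hi01, Finset.mem_univ _⟩)]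
    rw [split]
    have hrest : ∏ i ∈ s, ‖H (charMap (c i) ψ)‖ ≤ (n * m) ^ (k - 2) := by
      rw [← hscard, ← Finset.prod_const]
      exact Finset.prod_le_prod (fun i _ => norm_nonneg _)
        (fun i _ => norm_H_le hm0 hgm hsum _)
    have h2 : (0:ℝ) ≤ ‖H (charMap (c i0) ψ)‖ * ‖H (charMap (c i1) ψ)‖ :=
      mul_nonneg (norm_nonneg _) (norm_nonneg _)
    calc ‖H (charMap (c i0) ψ)‖ * (‖H (charMap (c i1) ψ)‖ * ∏ i ∈ s, ‖H (charMap (c i) ψ)‖)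
        = (‖H (charMap (c i0) ψ)‖ * ‖H (charMap (c i1) ψ)‖) * ∏ i ∈ s, ‖H (charMap (c i) ψ)‖ := by
          ring
      _ ≤ (‖H (charMap (c i0) ψ)‖ * ‖H (charMap (c i1) ψ)‖) * (n * m) ^ (k - 2) :=
          mul_le_mul_of_nonneg_left hrest h2
      _ = (n * m) ^ (k - 2) * (‖H (charMap (c i0) ψ)‖ * ‖H (charMap (c i1) ψ)‖) := by ring
  have hCS : ∑ ψ : AddChar G ℂ, ‖H (charMap (c i0) ψ)‖ * ‖H (charMap (c i1) ψ)‖ ≤ P := by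
    have h2 := Finset.sum_mul_sq_le_sq_mul_sq univ
      (fun ψ : AddChar G ℂ => ‖H (charMap (c i0) ψ)‖) (fun ψ => ‖H (charMap (c i1) ψ)‖)
    rw [reindex i0, reindex i1] at h2
    have hnn : (0:ℝ) ≤ ∑ ψ : AddChar G ℂ, ‖H (charMap (c i0) ψ)‖ * ‖H (charMap (c i1) ψ)‖ :=
      Finset.sum_nonneg fun ψ _ => mul_nonneg (norm_nonneg _) (norm_nonneg _)
    have : (∑ ψ : AddChar G ℂ, ‖H (charMap (c i0) ψ)‖ * ‖H (charMap (c i1) ψ)‖) ^ 2 ≤ P ^ 2 := by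
      rw [sq P]; exact h2
    exact le_of_pow_le_pow_left₀ two_ne_zero hPn this
  have hnorm : n * T ≤ (n * m) ^ (k - 2) * P := by
    have e1 : n * T ≤ ‖(Fintype.card G : ℂ) * (T : ℂ)‖ := by
      rw [← Complex.ofReal_natCast, ← Complex.ofReal_mul, Complex.norm_real]
      exact le_abs_self _
    have e2 : ‖∑ ψ : AddChar G ℂ, ∏ i, H (charMap (c i) ψ)‖
        ≤ ∑ ψ : AddChar G ℂ, ∏ i, ‖H (charMap (c i) ψ)‖ := by
      refine (norm_sum_le _ _).trans ?_
      exact Finset.sum_le_sum fun ψ _ => Finset.norm_prod_le _ _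
    have e3 : ∑ ψ : AddChar G ℂ, ∏ i, ‖H (charMap (c i) ψ)‖ ≤ (n * m) ^ (k - 2) * P := by
      calc ∑ ψ : AddChar G ℂ, ∏ i, ‖H (charMap (c i) ψ)‖
          ≤ ∑ ψ : AddChar G ℂ, (n * m) ^ (k - 2) *
              (‖H (charMap (c i0) ψ)‖ * ‖H (charMap (c i1) ψ)‖) :=
            Finset.sum_le_sum fun ψ _ => prod_bound ψ
        _ = (n * m) ^ (k - 2) *
              ∑ ψ : AddChar G ℂ, ‖H (charMap (c i0) ψ)‖ * ‖H (charMap (c i1) ψ)‖ := by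
            rw [Finset.mul_sum]
        _ ≤ (n * m) ^ (k - 2) * P := by
            refine mul_le_mul_of_nonneg_left hCS (by positivity)
    calc n * T ≤ ‖(Fintype.card G : ℂ) * (T : ℂ)‖ := e1
      _ = ‖∑ ψ : AddChar G ℂ, ∏ i, H (charMap (c i) ψ)‖ := by rw [hkey]
      _ ≤ (n * m) ^ (k - 2) * P := e2.trans e3
  have hPval : P = n * ∑ y, g y ^ 2 := parseval g
  rw [hPval] at hnorm
  have final : n * T ≤ n * ((n : ℝ) ^ (k - 2) * m ^ (k - 2) * ∑ y, g y ^ 2) := by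
    calc n * T ≤ (n * m) ^ (k - 2) * (n * ∑ y, g y ^ 2) := hnorm
      _ = n * ((n : ℝ) ^ (k - 2) * m ^ (k - 2) * ∑ y, g y ^ 2) := by rw [mul_pow]; ring
  exact le_of_mul_le_mul_left final hnpos

end Stmt8Aux

theorem stmt_8 (M : ℝ) {G : Type*} [AddCommGroup G] [Finite G]
    (f : G → ℝ) (hf : ∃ a b : G, f a ≠ f b)
    {k : ℕ} (hk : 3 ≤ k) (c : Fin k → ℤ)
    (hc : ∀ i, IsCoprime (c i) (Nat.card G : ℤ))
    (heven : Even k)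
    (hlam : lam c (balanced f) ≥ M ^ (k - 2) * norm2sq (balanced f)) :
    (∃ g : G, balanced f g ≥ M) ∧ (∃ g : G, f g ≥ expect f + M) := by
  classical
  cases nonempty_fintype G
  set n : ℝ := (Fintype.card G : ℝ) with hn
  have hnpos : (0 : ℝ) < n := by rw [hn]; exact_mod_cast Fintype.card_pos
  have hcard : (Nat.card G : ℝ) = n := by rw [Nat.card_eq_fintype_card, hn]
  have hc' : ∀ i, IsCoprime (c i) (Fintype.card G : ℤ) := by
    intro i; have := hc i; rwa [Nat.card_eq_fintype_card] at this
  set g : G → ℝ := balanced f with hg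
  -- basic facts about g
  have hexp : expect f = (∑ x, f x) / n := by
    rw [show expect f = (∑ᶠ x, f x) / (Nat.card G : ℝ) from rfl, finsum_eq_sum_of_fintype,
      Nat.card_eq_fintype_card, hn]
  have hsum : ∑ x, g x = 0 := by
    simp only [hg, balanced, Finset.sum_sub_distrib, Finset.sum_const, Finset.card_univ,
      nsmul_eq_mul, hexp]
    field_simp
    rw [hn]; ring
  -- max of g
  obtain ⟨x₀, -, hx₀⟩ := Finset.exists_max_image (Finset.univ : Finset G) g ⟨0, Finset.mem_univ 0⟩
  set m : ℝ := g x₀ with hm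
  have hgm : ∀ x, g x ≤ m := fun x => hx₀ x (Finset.mem_univ x)
  have hm0 : 0 ≤ m := by
    by_contra hneg
    push_neg at hneg
    have : ∑ x, g x < 0 := by
      have : ∑ x, g x ≤ ∑ _x : G, m := Finset.sum_le_sum fun x _ => hgm x
      have h2 : (∑ _x : G, m) = (Fintype.card G : ℝ) * m := by
        rw [Finset.sum_const, Finset.card_univ, nsmul_eq_mul]
      nlinarith
    rw [hsum] at this; exact lt_irrefl _ this
  -- positivity of the L2 norm
  have hex : ∃ x, g x ≠ 0 := by
    obtain ⟨a, b, hab⟩ := hf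
    by_contra hz
    push_neg at hz
    apply hab
    have ha := hz a; have hb := hz b
    simp only [hg, balanced, sub_eq_zero] at ha hb
    rw [ha, hb]
  have hQpos : 0 < ∑ y, g y ^ 2 := by
    obtain ⟨x, hx⟩ := hex
    exact Finset.sum_pos' (fun y _ => sq_nonneg _) ⟨x, Finset.mem_univ x, by positivity⟩
  -- rewrite lam in Finset terms
  set T : ℝ := ∑ x ∈ Finset.univ.filter (fun x : Fin k → G => ∑ i, c i • x i = 0),
    ∏ i, g (x i) with hT
  have hset : {x : Fin k → G | ∑ i, c i • x i = 0}
      = ↑(Finset.univ.filter (fun x : Fin k → G => ∑ i, c i • x i = 0)) := by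
    ext x; simp
  have hfin : ∑ᶠ x ∈ {x : Fin k → G | ∑ i, c i • x i = 0}, ∏ i, g (x i) = T := by
    rw [hset, finsum_mem_coe_finset, hT]
  have hNcard : (Nat.card {x : Fin k → G // ∑ i, c i • x i = 0} : ℝ) = n ^ (k - 1) := by
    rw [Nat.card_eq_fintype_card, Fintype.card_subtype]
    exact Stmt8Aux.count_sol (by omega) c hc'
  have hlamval : lam c g = T / n ^ (k - 1) := by
    rw [lam, hfin, hNcard]
  -- main bound
  have hbound : T ≤ n ^ (k - 2) * m ^ (k - 2) * ∑ y, g y ^ 2 :=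
    Stmt8Aux.main_bound hk c hc' hm0 hgm hsum
  -- norm2sq value
  have hn2 : norm2sq g = (∑ y, g y ^ 2) / n := by
    rw [show norm2sq g = (∑ᶠ y, g y ^ 2) / (Nat.card G : ℝ) from rfl, finsum_eq_sum_of_fintype,
      Nat.card_eq_fintype_card, hn]
  -- combine
  have hNpos : (0:ℝ) < n ^ (k - 1) := by positivity
  have hstep : M ^ (k - 2) * ((∑ y, g y ^ 2) / n) ≤ m ^ (k - 2) * ((∑ y, g y ^ 2) / n) := by
    have h1 : M ^ (k - 2) * ((∑ y, g y ^ 2) / n) ≤ T / n ^ (k - 1) := by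
      rw [← hn2, ← hlamval]; exact hlam
    have h2 : T / n ^ (k - 1) ≤ m ^ (k - 2) * ((∑ y, g y ^ 2) / n) := by
      rw [div_le_iff₀ hNpos]
      calc T ≤ n ^ (k - 2) * m ^ (k - 2) * ∑ y, g y ^ 2 := hbound
        _ = m ^ (k - 2) * ((∑ y, g y ^ 2) / n) * n ^ (k - 1) := by
            have : n ^ (k - 1) = n ^ (k - 2) * n := by
              rw [← pow_succ]
              congr 1
              omega
            rw [this]
            field_simp
    exact h1.trans h2
  have hpow : M ^ (k - 2) ≤ m ^ (k - 2) := by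
    have hq : 0 < (∑ y, g y ^ 2) / n := by positivity
    exact le_of_mul_le_mul_right (by simpa [mul_comm] using hstep) hq
  have hMm : M ≤ m := by
    rcases le_or_gt M 0 with hM | hM
    · exact hM.trans hm0
    · exact le_of_pow_le_pow_left₀ (by omega) hm0 hpow
  refine ⟨⟨x₀, hMm⟩, ⟨x₀, ?_⟩⟩
  have : f x₀ = g x₀ + expect f := by simp [hg, balanced]
  rw [this]
  linarith
end
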